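/- arXiv:2004.05127 — 5 statements merged into one kernel-verified Lean document; each statement's English description precedes it below -/
import Mathlib

section
/- (Knight's identity.) For every τ ∈ (0,1) and all real numbers u and v, ρ_τ(u − v) − ρ_τ(u) = −v·ψ_τ(u) + ∫₀^v (1{u < s} − 1{u < 0}) ds, where the integral ∫₀^v is the signed Lebesgue integral from 0 to v (equal to minus the integral over [v,0] when v < 0). -/
open MeasureTheory Set

/-- The quantile regression check function `ρ_τ(u) = u(τ - 1{u < 0})`. -/
noncomputable def checkFn (τ u : ℝ) : ℝ := u * (τ - if u < 0 then 1 else 0)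

/-- The quantile score function `ψ_τ(u) = τ - 1{u < 0}`. -/
noncomputable def scoreFn (τ u : ℝ) : ℝ := τ - if u < 0 then 1 else 0

lemma step_intble (u a b : ℝ) :
    IntervalIntegrable (fun s => if u ≤ s then (1:ℝ) else 0) volume a b := by
  have : (fun s => if u ≤ s then (1:ℝ) else 0) = Set.indicator (Set.Ici u) (fun _ => (1:ℝ)) := by
    ext s; by_cases h : u ≤ s <;> simp [Set.indicator, h]
  rw [this, intervalIntegrable_iff]
  exact (integrableOn_const measure_Ioc_lt_top.ne).indicator measurableSet_Ici

lemma step_intble' (u a b : ℝ) :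
    IntervalIntegrable (fun s => if u < s then (1:ℝ) else 0) volume a b := by
  have : (fun s => if u < s then (1:ℝ) else 0) = Set.indicator (Set.Ioi u) (fun _ => (1:ℝ)) := by
    ext s; by_cases h : u < s <;> simp [Set.indicator, h]
  rw [this, intervalIntegrable_iff]
  exact (integrableOn_const measure_Ioc_lt_top.ne).indicator measurableSet_Ioi

lemma step_integral (u a b : ℝ) :
    ∫ s in a..b, (if u < s then (1:ℝ) else 0) = max b u - max a u := by
  have hae : ∫ s in a..b, (if u < s then (1:ℝ) else 0)
      = ∫ s in a..b, (if u ≤ s then (1:ℝ) else 0) := by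
    apply intervalIntegral.integral_congr_ae
    have h0 : (volume : Measure ℝ) {u} = 0 := measure_singleton u
    filter_upwards [measure_eq_zero_iff_ae_notMem.mp h0] with s hs _
    have hne : s ≠ u := fun h => hs (by simp [h])
    rcases lt_or_gt_of_ne hne with h | h
    · simp [not_le.mpr h, not_lt.mpr h.le]
    · simp [h.le, h]
  rw [hae]
  apply intervalIntegral.integral_eq_sub_of_hasDeriv_right
  · exact (continuous_id.max continuous_const).continuousOn
  · intro x _
    rcases lt_or_ge x u with h | h
    · rw [if_neg (not_le.mpr h)]
      have : (fun s => max s u) =ᶠ[nhds x] fun _ => u := by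
        filter_upwards [Iio_mem_nhds h] with s hs
        exact max_eq_right (le_of_lt hs)
      exact ((hasDerivAt_const x u).congr_of_eventuallyEq this).hasDerivWithinAt
    · rw [if_pos h]
      refine (hasDerivWithinAt_id x (Ioi x)).congr (fun s hs => max_eq_left (h.trans hs.le)) ?_
      exact max_eq_left h
  · exact step_intble u a b

/-- Knight's identity: for every `τ ∈ (0,1)` and all reals `u, v`,
`ρ_τ(u − v) − ρ_τ(u) = −v·ψ_τ(u) + ∫₀^v (1{u < s} − 1{u < 0}) ds`,
where the integral is the signed (interval) Lebesgue integral from `0` to `v`. -/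
theorem knight_identity (τ : ℝ) (hτ : τ ∈ Set.Ioo (0 : ℝ) 1) (u v : ℝ) :
    checkFn τ (u - v) - checkFn τ u
      = -v * scoreFn τ u
        + ∫ s in (0 : ℝ)..v,
            ((if u < s then (1 : ℝ) else 0) - (if u < 0 then (1 : ℝ) else 0)) := by
  rw [intervalIntegral.integral_sub (step_intble' u 0 v) intervalIntegrable_const,
    step_integral, intervalIntegral.integral_const]
  unfold checkFn scoreFn
  rcases lt_or_ge u v with h1 | h1 <;> rcases lt_or_ge u 0 with h2 | h2
  · rw [if_pos (sub_lt_zero.mpr h1), if_pos h2,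
      max_eq_left (le_of_lt h2), max_eq_left (le_of_lt h1)]
    simp only [smul_eq_mul]; ring
  · rw [if_pos (sub_lt_zero.mpr h1), if_neg (not_lt.mpr h2),
      max_eq_right h2, max_eq_left (le_of_lt h1)]
    simp only [smul_eq_mul]; ring
  · rw [if_neg (not_lt.mpr (sub_nonneg.mpr h1)), if_pos h2,
      max_eq_left (le_of_lt h2), max_eq_right h1]
    simp only [smul_eq_mul]; ring
  · rw [if_neg (not_lt.mpr (sub_nonneg.mpr h1)), if_neg (not_lt.mpr h2),
      max_eq_right h2, max_eq_right h1]
    simp only [smul_eq_mul]; ring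
end

section
/- Fix τ ∈ (0,1), an integer N ≥ 1, responses y_1, …, y_N ∈ ℝ, and covariates for each observation i split as (X_i, x_{pi}) with X_i ∈ ℝ^{p−1} and x_{pi} ∈ ℝ. Let λ > 0 and suppose (â, b̂) ∈ ℝ^{p−1} × ℝ minimizes the penalized objective (a, b) ↦ Σ_{i=1}^N ρ_τ(y_i − X_i'a − b x_{pi}) + λ(‖a‖₁ + |b|) over ℝ^{p−1} × ℝ. If max{τ, 1−τ} · Σ_{i=1}^N |x_{pi}| < λ, then b̂ = 0. -/
lemma checkFn_eq_max (τ u : ℝ) (hτ : τ ∈ Set.Ioo (0 : ℝ) 1) :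
    checkFn τ u = max (τ * u) ((τ - 1) * u) := by
  obtain ⟨h0, h1⟩ := hτ
  unfold checkFn
  split_ifs with h
  · rw [max_eq_right (by nlinarith)]; ring
  · rw [max_eq_left (by nlinarith [not_lt.mp h])]; ring

lemma checkFn_lip (τ u v : ℝ) (hτ : τ ∈ Set.Ioo (0 : ℝ) 1) :
    checkFn τ u - checkFn τ v ≤ max τ (1 - τ) * |u - v| := by
  obtain ⟨h0, h1⟩ := hτ
  rw [checkFn_eq_max τ u ⟨h0, h1⟩, checkFn_eq_max τ v ⟨h0, h1⟩]
  have habs := abs_nonneg (u - v)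
  have h2 : u - v ≤ |u - v| := le_abs_self _
  have h3 : -(u - v) ≤ |u - v| := neg_le_abs _
  have hm1 : τ ≤ max τ (1 - τ) := le_max_left _ _
  have hm2 : 1 - τ ≤ max τ (1 - τ) := le_max_right _ _
  rcases max_cases (τ * u) ((τ - 1) * u) with ⟨he, _⟩ | ⟨he, _⟩ <;> rw [he]
  · calc τ * u - max (τ * v) ((τ - 1) * v) ≤ τ * u - τ * v := by
          linarith [le_max_left (τ * v) ((τ - 1) * v)]
      _ = τ * (u - v) := by ring
      _ ≤ max τ (1 - τ) * |u - v| := by nlinarith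
  · calc (τ - 1) * u - max (τ * v) ((τ - 1) * v) ≤ (τ - 1) * u - (τ - 1) * v := by
          linarith [le_max_right (τ * v) ((τ - 1) * v)]
      _ = (1 - τ) * (-(u - v)) := by ring
      _ ≤ max τ (1 - τ) * |u - v| := by nlinarith

/-- If `(â, b̂)` minimizes the ℓ₁-penalized quantile regression objective
`(a, b) ↦ Σᵢ ρ_τ(yᵢ − Xᵢ'a − b·x_{pi}) + λ(‖a‖₁ + |b|)` and
`max {τ, 1−τ} · Σᵢ |x_{pi}| < λ`, then `b̂ = 0`. -/
theorem penalized_qr_zero_coef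
    (τ : ℝ) (hτ : τ ∈ Set.Ioo (0 : ℝ) 1)
    (N d : ℕ) (hN : 1 ≤ N)
    (y : Fin N → ℝ) (X : Fin N → Fin d → ℝ) (xp : Fin N → ℝ)
    (lam : ℝ) (hlam : 0 < lam)
    (ahat : Fin d → ℝ) (bhat : ℝ)
    (hmin : ∀ (a : Fin d → ℝ) (b : ℝ),
      (∑ i, checkFn τ (y i - ∑ j, X i j * ahat j - bhat * xp i))
          + lam * ((∑ j, |ahat j|) + |bhat|)
        ≤ (∑ i, checkFn τ (y i - ∑ j, X i j * a j - b * xp i))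
            + lam * ((∑ j, |a j|) + |b|))
    (hbound : max τ (1 - τ) * ∑ i, |xp i| < lam) :
    bhat = 0 := by
  by_contra hb
  have hbpos : 0 < |bhat| := abs_pos.mpr hb
  have h := hmin ahat 0
  simp only [zero_mul, sub_zero, abs_zero, add_zero] at h
  -- λ|bhat| ≤ Σ (ρ v_i - ρ u_i)
  have key : lam * |bhat| ≤
      ∑ i, (checkFn τ (y i - ∑ j, X i j * ahat j)
        - checkFn τ (y i - ∑ j, X i j * ahat j - bhat * xp i)) := by
    rw [Finset.sum_sub_distrib]
    linarith
  have bound : ∑ i, (checkFn τ (y i - ∑ j, X i j * ahat j)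
        - checkFn τ (y i - ∑ j, X i j * ahat j - bhat * xp i))
      ≤ max τ (1 - τ) * |bhat| * ∑ i, |xp i| := by
    rw [Finset.mul_sum]
    apply Finset.sum_le_sum
    intro i _
    have := checkFn_lip τ (y i - ∑ j, X i j * ahat j)
      (y i - ∑ j, X i j * ahat j - bhat * xp i) hτ
    calc _ ≤ max τ (1 - τ) * |(y i - ∑ j, X i j * ahat j) -
            (y i - ∑ j, X i j * ahat j - bhat * xp i)| := this
      _ = max τ (1 - τ) * |bhat| * |xp i| := by
          rw [show (y i - ∑ j, X i j * ahat j) -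
            (y i - ∑ j, X i j * ahat j - bhat * xp i) = bhat * xp i by ring,
            abs_mul]; ring
  have hs : 0 ≤ ∑ i, |xp i| := Finset.sum_nonneg fun i _ => abs_nonneg _
  nlinarith [key, bound, hbound, hbpos]
end

section
/- Let U be a real random variable with an absolutely continuous distribution whose Lebesgue density f is bounded and continuous at 0, and let W be a real random variable independent of U whose distribution μ satisfies: (i) μ is supported in (−∞, −c₁] ∪ [c₂, ∞) for some constants c₁ > 0, c₂ > 0; and (ii) ∫_{(0,∞)} w^{−1} dμ(w) = 1/2 and ∫_{(−∞,0)} w^{−1} dμ(w) = −1/2. Fix τ ∈ (0,1). Then, as the real number a → 0, E[ ∫₀^a ( ψ_τ(W|U| − s) − ψ_τ(W|U|) ) ds ] = −(f(0)/2)·a² + o(a²), where ∫₀^a denotes the signed Lebesgue integral from 0 to a. -/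
open MeasureTheory ProbabilityTheory Filter Asymptotics
open scoped ENNReal

set_option maxHeartbeats 2000000 in
/-- Second-order expansion of the expected integrated wild-bootstrap score increment
(part 1 of Lemma S.3): if `U` has a bounded density `f` continuous at `0`, `W` is
independent of `U` with distribution supported away from `0` whose signed reciprocal
moments on the two half-lines are `±1/2`, then as `a → 0`,
`E[∫₀^a (ψ_τ(W|U| − s) − ψ_τ(W|U|)) ds] = −(f(0)/2)·a² + o(a²)`. -/
theorem wild_bootstrap_expansion_integrated
    {Ω : Type*} [MeasurableSpace Ω] (μ : Measure Ω) [IsProbabilityMeasure μ]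
    (τ : ℝ) (hτ : τ ∈ Set.Ioo (0 : ℝ) 1)
    (U W : Ω → ℝ) (hU : Measurable U) (hW : Measurable W)
    (hindep : IndepFun U W μ)
    (f : ℝ → ℝ) (hf_nonneg : ∀ x, 0 ≤ f x)
    (hf_density : Measure.map U μ
      = MeasureTheory.volume.withDensity (fun x => ENNReal.ofReal (f x)))
    (hf_bdd : ∃ C : ℝ, ∀ x, f x ≤ C)
    (hf_cont : ContinuousAt f 0)
    (c₁ c₂ : ℝ) (hc₁ : 0 < c₁) (hc₂ : 0 < c₂)
    (hsupp : Measure.map W μ (Set.Ioo (-c₁) c₂) = 0)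
    (hpos : ∫ w in Set.Ioi (0 : ℝ), w⁻¹ ∂(Measure.map W μ) = 1 / 2)
    (hneg : ∫ w in Set.Iio (0 : ℝ), w⁻¹ ∂(Measure.map W μ) = -(1 / 2)) :
    (fun a : ℝ =>
        (∫ ω, (∫ s in (0 : ℝ)..a,
            (scoreFn τ (W ω * |U ω| - s) - scoreFn τ (W ω * |U ω|))) ∂μ)
          + f 0 / 2 * a ^ 2)
      =o[nhds (0 : ℝ)] (fun a => a ^ 2) := by
  classical
  have hUae : AEMeasurable U μ := hU.aemeasurable
  have hWae : AEMeasurable W μ := hW.aemeasurable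
  set μW := Measure.map W μ with hμWdef
  set μU := Measure.map U μ with hμUdef
  haveI : IsProbabilityMeasure μU := Measure.isProbabilityMeasure_map hUae
  haveI : IsProbabilityMeasure μW := Measure.isProbabilityMeasure_map hWae
  have hT : Measurable (fun ω => W ω * |U ω|) := hW.mul hU.abs
  set T : Ω → ℝ := fun ω => W ω * |U ω| with hTdef
  set ν := Measure.map T μ with hνdef
  haveI : IsProbabilityMeasure ν := Measure.isProbabilityMeasure_map hT.aemeasurable
  set φ : ℝ → ℝ := fun s => (ν (Set.Iio 0)).toReal - (ν (Set.Iio s)).toReal with hφdef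
  -- step A+B : the expectation equals the interval integral of φ
  have hkey : ∀ a : ℝ, (∫ ω, (∫ s in (0 : ℝ)..a,
      (scoreFn τ (W ω * |U ω| - s) - scoreFn τ (W ω * |U ω|))) ∂μ)
      = ∫ s in (0 : ℝ)..a, φ s := by
    intro a
    have hrw : ∀ ω : Ω, (∫ s in (0 : ℝ)..a,
        (scoreFn τ (W ω * |U ω| - s) - scoreFn τ (W ω * |U ω|)))
        = ∫ s in (0 : ℝ)..a,
            ((if W ω * |U ω| < 0 then (1:ℝ) else 0) - (if W ω * |U ω| < s then 1 else 0)) := by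
      intro ω
      congr 1
      funext s
      simp only [scoreFn, sub_neg]
      ring
    have hmeas2 : Measurable (Function.uncurry
        (fun (ω : Ω) (s : ℝ) => (if W ω * |U ω| < 0 then (1:ℝ) else 0)
          - (if W ω * |U ω| < s then 1 else 0))) := by
      refine Measurable.sub ?_ ?_
      · exact Measurable.ite
          (measurableSet_lt (hT.comp measurable_fst) measurable_const)
          measurable_const measurable_const
      · exact Measurable.ite
          (measurableSet_lt (hT.comp measurable_fst) measurable_snd)
          measurable_const measurable_const
    have hint : ∀ b d : ℝ, Integrable (Function.uncurry
        (fun (ω : Ω) (s : ℝ) => (if W ω * |U ω| < 0 then (1:ℝ) else 0)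
          - (if W ω * |U ω| < s then 1 else 0)))
        (μ.prod (volume.restrict (Set.Ioc b d))) := by
      intro b d
      haveI : IsFiniteMeasure (volume.restrict (Set.Ioc b d)) :=
        ⟨by rw [Measure.restrict_apply_univ]; exact measure_Ioc_lt_top⟩
      refine ⟨hmeas2.aestronglyMeasurable, ?_⟩
      refine HasFiniteIntegral.of_bounded (C := 2) (Filter.Eventually.of_forall ?_)
      rintro ⟨ω, s⟩
      simp only [Function.uncurry, Real.norm_eq_abs]
      split_ifs <;> norm_num
    have hνr : ∀ r : ℝ, ν (Set.Iio r) = μ {ω : Ω | W ω * |U ω| < r} := by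
      intro r
      rw [hνdef, Measure.map_apply hT measurableSet_Iio, hTdef]
      rfl
    have hintr : ∀ r : ℝ, Integrable (fun ω => if W ω * |U ω| < r then (1:ℝ) else 0) μ := by
      intro r
      refine Integrable.mono' (integrable_const 1) ?_ (Filter.Eventually.of_forall fun ω => ?_)
      · refine (Measurable.ite ?_ measurable_const measurable_const).aestronglyMeasurable
        exact measurableSet_lt hT measurable_const
      · rw [Real.norm_eq_abs]
        split_ifs <;> norm_num
    have hrepr : ∀ r : ℝ, (∫ ω, (if W ω * |U ω| < r then (1:ℝ) else 0) ∂μ)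
        = (ν (Set.Iio r)).toReal := by
      intro r
      have hset : MeasurableSet {ω : Ω | W ω * |U ω| < r} :=
        measurableSet_lt hT measurable_const
      have hind : (fun ω => if W ω * |U ω| < r then (1:ℝ) else 0)
          = Set.indicator {ω : Ω | W ω * |U ω| < r} (fun _ => (1:ℝ)) := by
        ext ω
        simp [Set.indicator_apply]
      rw [hind, integral_indicator_const _ hset, hνr r]
      simp
      rfl
    have hφ' : ∀ s : ℝ, (∫ ω, ((if W ω * |U ω| < 0 then (1:ℝ) else 0)
        - (if W ω * |U ω| < s then 1 else 0)) ∂μ) = φ s := by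
      intro s
      rw [integral_sub (hintr 0) (hintr s), hrepr 0, hrepr s]
    have hswap : ∀ b d : ℝ, (∫ ω, (∫ s in Set.Ioc b d,
        ((if W ω * |U ω| < 0 then (1:ℝ) else 0) - (if W ω * |U ω| < s then 1 else 0))) ∂μ)
        = ∫ s in Set.Ioc b d, (∫ ω, ((if W ω * |U ω| < 0 then (1:ℝ) else 0)
            - (if W ω * |U ω| < s then 1 else 0)) ∂μ) := by
      intro b d
      exact integral_integral_swap (hint b d)
    calc (∫ ω, (∫ s in (0 : ℝ)..a,
            (scoreFn τ (W ω * |U ω| - s) - scoreFn τ (W ω * |U ω|))) ∂μ)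
        = ∫ ω, (∫ s in (0 : ℝ)..a,
            ((if W ω * |U ω| < 0 then (1:ℝ) else 0)
              - (if W ω * |U ω| < s then 1 else 0))) ∂μ :=
          integral_congr_ae (Filter.Eventually.of_forall hrw)
      _ = ∫ ω, ((∫ s in Set.Ioc 0 a,
            ((if W ω * |U ω| < 0 then (1:ℝ) else 0) - (if W ω * |U ω| < s then 1 else 0)))
          - (∫ s in Set.Ioc a 0,
            ((if W ω * |U ω| < 0 then (1:ℝ) else 0)
              - (if W ω * |U ω| < s then 1 else 0)))) ∂μ := rfl
      _ = (∫ ω, (∫ s in Set.Ioc 0 a,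
            ((if W ω * |U ω| < 0 then (1:ℝ) else 0)
              - (if W ω * |U ω| < s then 1 else 0))) ∂μ)
          - ∫ ω, (∫ s in Set.Ioc a 0,
            ((if W ω * |U ω| < 0 then (1:ℝ) else 0)
              - (if W ω * |U ω| < s then 1 else 0))) ∂μ :=
          integral_sub (hint 0 a).integral_prod_left (hint a 0).integral_prod_left
      _ = (∫ s in Set.Ioc 0 a, (∫ ω, ((if W ω * |U ω| < 0 then (1:ℝ) else 0)
              - (if W ω * |U ω| < s then 1 else 0)) ∂μ))
          - ∫ s in Set.Ioc a 0, (∫ ω, ((if W ω * |U ω| < 0 then (1:ℝ) else 0)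
              - (if W ω * |U ω| < s then 1 else 0)) ∂μ) := by
          rw [hswap 0 a, hswap a 0]
      _ = (∫ s in Set.Ioc 0 a, φ s) - ∫ s in Set.Ioc a 0, φ s := by
          simp only [hφ']
      _ = ∫ s in (0 : ℝ)..a, φ s := rfl
  -- basic facts about μU
  have hμU0 : μU {(0 : ℝ)} = 0 := by
    rw [hf_density, withDensity_apply _ (measurableSet_singleton 0),
      Measure.restrict_eq_zero.mpr (by simp), lintegral_zero_measure]
  -- slicing ν through the product measure
  have hprod : μ.map (fun ω => (W ω, U ω)) = μW.prod μU :=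
    (indepFun_iff_map_prod_eq_prod_map_map hWae hUae).mp hindep.symm
  have hν_eq : ∀ A : Set ℝ, MeasurableSet A →
      ν A = ∫⁻ w, μU {u | w * |u| ∈ A} ∂μW := by
    intro A hA
    have hmeasset : MeasurableSet {p : ℝ × ℝ | p.1 * |p.2| ∈ A} :=
      (measurable_fst.mul measurable_snd.abs) hA
    have h1 : ν A = μ ((fun ω => (W ω, U ω)) ⁻¹' {p : ℝ × ℝ | p.1 * |p.2| ∈ A}) := by
      rw [hνdef, Measure.map_apply hT hA]; rfl
    rw [h1, ← Measure.map_apply (hW.prodMk hU) hmeasset, hprod,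
      Measure.prod_apply hmeasset]
    rfl
  -- splitting lintegrals over μW
  have hsplit : ∀ G : ℝ → ℝ≥0∞, (∫⁻ w, G w ∂μW)
      = (∫⁻ w in Set.Iic (-c₁), G w ∂μW) + ∫⁻ w in Set.Ici c₂, G w ∂μW := by
    intro G
    have h1 := lintegral_add_compl (μ := μW) G (measurableSet_Ici (a := c₂))
    have h2 : (Set.Ici c₂)ᶜ = Set.Iio c₂ := Set.compl_Ici
    have h3 : Set.Iic (-c₁) ∪ Set.Ioo (-c₁) c₂ = Set.Iio c₂ :=
      Set.Iic_union_Ioo_eq_Iio (by linarith)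
    have h4 : ∫⁻ w in Set.Iio c₂, G w ∂μW
        = (∫⁻ w in Set.Iic (-c₁), G w ∂μW) + ∫⁻ w in Set.Ioo (-c₁) c₂, G w ∂μW := by
      rw [← h3, lintegral_union measurableSet_Ioo]
      rw [Set.disjoint_left]
      intro x hx hx2
      exact absurd hx2.1 (not_lt.mpr hx)
    have h5 : ∫⁻ w in Set.Ioo (-c₁) c₂, G w ∂μW = 0 :=
      setLIntegral_measure_zero _ _ hsupp
    rw [← h1, h2, h4, h5]
    ring
  -- the reciprocal moments, in lintegral form
  have hJpos : ∫⁻ w in Set.Ici c₂, ENNReal.ofReal w⁻¹ ∂μW = ENNReal.ofReal (1 / 2) := by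
    have hnull2 : μW (Set.Ioo 0 c₂) = 0 :=
      measure_mono_null (Set.Ioo_subset_Ioo_left (by linarith)) hsupp
    have hIciInt : IntegrableOn (fun w : ℝ => w⁻¹) (Set.Ici c₂) μW := by
      refine Integrable.mono' (integrable_const c₂⁻¹) measurable_inv.aestronglyMeasurable ?_
      refine ae_restrict_of_forall_mem measurableSet_Ici ?_
      intro w hw
      have hw0 : 0 < w := lt_of_lt_of_le hc₂ hw
      rw [Real.norm_eq_abs, abs_of_pos (inv_pos.mpr hw0)]
      exact inv_anti₀ hc₂ hw
    have hintOnIoo : IntegrableOn (fun w : ℝ => w⁻¹) (Set.Ioo 0 c₂) μW := by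
      unfold IntegrableOn
      rw [Measure.restrict_eq_zero.mpr hnull2]
      exact integrable_zero_measure
    have hdisj : Disjoint (Set.Ioo 0 c₂) (Set.Ici c₂) := by
      rw [Set.disjoint_left]
      intro x hx hx2
      exact absurd hx2 (not_le.mpr hx.2)
    have hsetint : ∫ w in Set.Ici c₂, w⁻¹ ∂μW = 1 / 2 := by
      rw [← hpos, ← Set.Ioo_union_Ici_eq_Ioi hc₂,
        setIntegral_union hdisj measurableSet_Ici hintOnIoo hIciInt]
      have hz : μW.restrict (Set.Ioo 0 c₂) = 0 := Measure.restrict_eq_zero.mpr hnull2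
      rw [show (∫ w in Set.Ioo 0 c₂, w⁻¹ ∂μW) = 0 by rw [hz]; exact integral_zero_measure _]
      ring
    have hnn : 0 ≤ᵐ[μW.restrict (Set.Ici c₂)] fun w : ℝ => w⁻¹ :=
      ae_restrict_of_forall_mem measurableSet_Ici
        (fun w hw => inv_nonneg.mpr (le_trans hc₂.le hw))
    rw [← ofReal_integral_eq_lintegral_ofReal hIciInt hnn, hsetint]
  have hJneg : ∫⁻ w in Set.Iic (-c₁), ENNReal.ofReal (-w⁻¹) ∂μW = ENNReal.ofReal (1 / 2) := by
    have hnull3 : μW (Set.Ioo (-c₁) 0) = 0 :=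
      measure_mono_null (Set.Ioo_subset_Ioo_right hc₂.le) hsupp
    have hIicInt : IntegrableOn (fun w : ℝ => w⁻¹) (Set.Iic (-c₁)) μW := by
      refine Integrable.mono' (integrable_const c₁⁻¹) measurable_inv.aestronglyMeasurable ?_
      refine ae_restrict_of_forall_mem measurableSet_Iic ?_
      intro w hw
      have hw0 : w < 0 := lt_of_le_of_lt hw (by linarith)
      rw [Real.norm_eq_abs, abs_inv]
      have hw' : w ≤ -c₁ := hw
      refine inv_anti₀ hc₁ ?_
      rw [abs_of_neg hw0]
      linarith
    have hintOnIoo : IntegrableOn (fun w : ℝ => w⁻¹) (Set.Ioo (-c₁) 0) μW := by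
      unfold IntegrableOn
      rw [Measure.restrict_eq_zero.mpr hnull3]
      exact integrable_zero_measure
    have hdisj : Disjoint (Set.Iic (-c₁)) (Set.Ioo (-c₁) 0) := by
      rw [Set.disjoint_left]
      intro x hx hx2
      exact absurd hx2.1 (not_lt.mpr hx)
    have hsetint2 : ∫ w in Set.Iic (-c₁), w⁻¹ ∂μW = -(1 / 2) := by
      have h3 : Set.Iic (-c₁) ∪ Set.Ioo (-c₁) 0 = Set.Iio 0 :=
        Set.Iic_union_Ioo_eq_Iio (by linarith)
      rw [← hneg, ← h3, setIntegral_union hdisj measurableSet_Ioo hIicInt hintOnIoo]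
      have hz : μW.restrict (Set.Ioo (-c₁) 0) = 0 := Measure.restrict_eq_zero.mpr hnull3
      rw [show (∫ w in Set.Ioo (-c₁) 0, w⁻¹ ∂μW) = 0 by rw [hz]; exact integral_zero_measure _]
      ring
    have hnn : 0 ≤ᵐ[μW.restrict (Set.Iic (-c₁))] fun w : ℝ => -w⁻¹ :=
      ae_restrict_of_forall_mem measurableSet_Iic
        (fun w hw => by
          have hw0 : w < 0 := lt_of_le_of_lt hw (by linarith)
          exact neg_nonneg.mpr (inv_nonpos.mpr hw0.le))
    have hIicIntNeg : IntegrableOn (fun w : ℝ => -w⁻¹) (Set.Iic (-c₁)) μW := hIicInt.neg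
    have heq := ofReal_integral_eq_lintegral_ofReal hIicIntNeg hnn
    rw [integral_neg, hsetint2] at heq
    rw [← heq]
    norm_num
  -- the main estimate
  rw [isLittleO_iff]
  intro c hc
  obtain ⟨δ, hδ, hδf⟩ : ∃ δ > 0, ∀ x : ℝ, |x - 0| < δ → |f x - f 0| < c := by
    have := Metric.continuousAt_iff.mp hf_cont c hc
    obtain ⟨δ, hδ, h⟩ := this
    exact ⟨δ, hδ, fun x hx => by simpa [Real.dist_eq] using h (by simpa [Real.dist_eq] using hx)⟩
  set η := min (δ * c₁) (δ * c₂) with hηdef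
  have hη : 0 < η := lt_min (by positivity) (by positivity)
  have hf0c : (0:ℝ) ≤ f 0 + c := by linarith [hf_nonneg 0]
  have hIccBound : ∀ t : ℝ, 0 < t → t < δ →
      μU (Set.Icc (-t) t) ≤ ENNReal.ofReal (f 0 + c) * ENNReal.ofReal (2 * t) := by
    intro t ht htδ
    rw [hf_density, withDensity_apply _ measurableSet_Icc]
    calc ∫⁻ x in Set.Icc (-t) t, ENNReal.ofReal (f x) ∂volume
        ≤ ∫⁻ _ in Set.Icc (-t) t, ENNReal.ofReal (f 0 + c) ∂volume := by
          refine setLIntegral_mono' measurableSet_Icc fun x hx => ENNReal.ofReal_le_ofReal ?_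
          have hxd : |x - 0| < δ := by
            rw [sub_zero]
            exact lt_of_le_of_lt (abs_le.mpr ⟨hx.1, hx.2⟩) htδ
          have := abs_lt.mp (hδf x hxd)
          linarith [this.2]
      _ = ENNReal.ofReal (f 0 + c) * volume (Set.Icc (-t) t) := setLIntegral_const _ _
      _ = ENNReal.ofReal (f 0 + c) * ENNReal.ofReal (2 * t) := by
          rw [Real.volume_Icc]
          congr 1
          ring
  have hIooBound : ∀ t : ℝ, 0 < t → t < δ →
      ENNReal.ofReal (f 0 - c) * ENNReal.ofReal (2 * t) ≤ μU (Set.Ioo (-t) t) := by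
    intro t ht htδ
    rw [hf_density, withDensity_apply _ measurableSet_Ioo]
    calc ENNReal.ofReal (f 0 - c) * ENNReal.ofReal (2 * t)
        = ∫⁻ _ in Set.Ioo (-t) t, ENNReal.ofReal (f 0 - c) ∂volume := by
          rw [setLIntegral_const, Real.volume_Ioo]
          congr 1
          ring
      _ ≤ ∫⁻ x in Set.Ioo (-t) t, ENNReal.ofReal (f x) ∂volume := by
          refine setLIntegral_mono' measurableSet_Ioo fun x hx => ENNReal.ofReal_le_ofReal ?_
          have hxd : |x - 0| < δ := by
            rw [sub_zero]
            exact lt_of_lt_of_le (abs_lt.mpr ⟨hx.1, hx.2⟩) htδ.le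
          have := abs_lt.mp (hδf x hxd)
          linarith [this.1]
  have hmeasInvNeg : Measurable fun w : ℝ => ENNReal.ofReal (-w⁻¹) :=
    (measurable_inv.neg).ennreal_ofReal
  have hmeasInv : Measurable fun w : ℝ => ENNReal.ofReal w⁻¹ :=
    measurable_inv.ennreal_ofReal
  have hψ : ∀ s : ℝ, |s| < η → |φ s + f 0 * s| ≤ c * |s| := by
    intro s hsη
    rcases lt_trichotomy s 0 with hs0 | rfl | hs0
    · -- case s < 0
      have hsplitν : ν (Set.Iio 0) = ν (Set.Iio s) + ν (Set.Ico s 0) := by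
        rw [← Set.Iio_union_Ico_eq_Iio hs0.le, measure_union ?_ measurableSet_Ico]
        rw [Set.disjoint_left]
        intro x hx hx2
        exact absurd hx2.1 (not_le.mpr hx)
      have hφs : φ s = (ν (Set.Ico s 0)).toReal := by
        simp only [hφdef]
        rw [hsplitν, ENNReal.toReal_add (measure_ne_top _ _) (measure_ne_top _ _)]
        ring
      have hw_all : ∀ w ∈ Set.Iic (-c₁), w < 0 := fun w hw => lt_of_le_of_lt hw (by linarith)
      have ht_all : ∀ w ∈ Set.Iic (-c₁), 0 < s / w ∧ s / w < δ := by
        intro w hw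
        have hw0 := hw_all w hw
        have hw' : w ≤ -c₁ := hw
        refine ⟨div_pos_of_neg_of_neg hs0 hw0, ?_⟩
        rw [div_lt_iff_of_neg hw0]
        have h1 : δ * w ≤ δ * (-c₁) := by nlinarith
        have h2 : η ≤ δ * c₁ := min_le_left _ _
        have h3 : -s < η := by rw [abs_of_neg hs0] at hsη; linarith
        linarith
      have hslice : ∀ w ∈ Set.Iic (-c₁),
          {u : ℝ | w * |u| ∈ Set.Ico s 0} = {u : ℝ | 0 < |u| ∧ |u| ≤ s / w} := by
        intro w hw
        have hw0 := hw_all w hw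
        ext u
        simp only [Set.mem_setOf_eq, Set.mem_Ico]
        constructor
        · rintro ⟨h1, h2⟩
          have hu0 : 0 < |u| := by
            rcases eq_or_lt_of_le (abs_nonneg u) with h | h
            · exfalso; rw [← h, mul_zero] at h2; exact absurd h2 (lt_irrefl 0)
            · exact h
          refine ⟨hu0, ?_⟩
          rw [le_div_iff_of_neg hw0]
          linarith [mul_comm w |u|]
        · rintro ⟨h1, h2⟩
          have := (le_div_iff_of_neg hw0).mp h2
          exact ⟨by linarith [mul_comm w |u|], mul_neg_of_neg_of_pos hw0 h1⟩
      have hν1 : ν (Set.Ico s 0)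
          = ∫⁻ w in Set.Iic (-c₁), μU {u | w * |u| ∈ Set.Ico s 0} ∂μW := by
        rw [hν_eq _ measurableSet_Ico, hsplit]
        have hzero : ∫⁻ w in Set.Ici c₂, μU {u | w * |u| ∈ Set.Ico s 0} ∂μW = 0 := by
          rw [setLIntegral_congr_fun measurableSet_Ici
            (fun w hw => ?_), lintegral_zero]
          have hw0 : 0 < w := lt_of_lt_of_le hc₂ hw
          have hempty : {u : ℝ | w * |u| ∈ Set.Ico s 0} = ∅ := by
            ext u
            simp only [Set.mem_setOf_eq, Set.mem_Ico, Set.mem_empty_iff_false, iff_false,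
              not_and, not_lt]
            intro _
            exact mul_nonneg hw0.le (abs_nonneg u)
          rw [hempty, measure_empty]
        rw [hzero, add_zero]
      have hub : ν (Set.Ico s 0) ≤ ENNReal.ofReal ((f 0 + c) * (-s)) := by
        rw [hν1]
        have hle : ∀ w ∈ Set.Iic (-c₁), μU {u | w * |u| ∈ Set.Ico s 0}
            ≤ (ENNReal.ofReal (f 0 + c) * ENNReal.ofReal (2 * (-s))) * ENNReal.ofReal (-w⁻¹) := by
          intro w hw
          have hw0 := hw_all w hw
          obtain ⟨ht0, htδ⟩ := ht_all w hw
          rw [hslice w hw]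
          have hsub : {u : ℝ | 0 < |u| ∧ |u| ≤ s / w} ⊆ Set.Icc (-(s/w)) (s/w) :=
            fun u hu => Set.mem_Icc.mpr ⟨(abs_le.mp hu.2).1, (abs_le.mp hu.2).2⟩
          calc μU {u : ℝ | 0 < |u| ∧ |u| ≤ s / w} ≤ μU (Set.Icc (-(s/w)) (s/w)) :=
                measure_mono hsub
            _ ≤ ENNReal.ofReal (f 0 + c) * ENNReal.ofReal (2 * (s/w)) := hIccBound _ ht0 htδ
            _ = (ENNReal.ofReal (f 0 + c) * ENNReal.ofReal (2 * (-s))) * ENNReal.ofReal (-w⁻¹) := by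
                rw [mul_assoc, ← ENNReal.ofReal_mul (by linarith : (0:ℝ) ≤ 2 * (-s))]
                congr 1
                rw [div_eq_mul_inv]
                ring
        calc ∫⁻ w in Set.Iic (-c₁), μU {u | w * |u| ∈ Set.Ico s 0} ∂μW
            ≤ ∫⁻ w in Set.Iic (-c₁),
                (ENNReal.ofReal (f 0 + c) * ENNReal.ofReal (2 * (-s)))
                  * ENNReal.ofReal (-w⁻¹) ∂μW := setLIntegral_mono' measurableSet_Iic hle
          _ = (ENNReal.ofReal (f 0 + c) * ENNReal.ofReal (2 * (-s)))
                * ∫⁻ w in Set.Iic (-c₁), ENNReal.ofReal (-w⁻¹) ∂μW :=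
              lintegral_const_mul _ hmeasInvNeg
          _ = (ENNReal.ofReal (f 0 + c) * ENNReal.ofReal (2 * (-s))) * ENNReal.ofReal (1/2) := by
              rw [hJneg]
          _ = ENNReal.ofReal ((f 0 + c) * (-s)) := by
              rw [← ENNReal.ofReal_mul hf0c, ← ENNReal.ofReal_mul (by nlinarith)]
              congr 1
              ring
      have hubR : (ν (Set.Ico s 0)).toReal ≤ (f 0 + c) * (-s) := by
        have := ENNReal.toReal_mono ENNReal.ofReal_ne_top hub
        rwa [ENNReal.toReal_ofReal (by nlinarith)] at this
      have hlbR : (f 0 - c) * (-s) ≤ (ν (Set.Ico s 0)).toReal := by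
        rcases le_or_gt (f 0 - c) 0 with h | h
        · exact le_trans (by nlinarith) ENNReal.toReal_nonneg
        · have hge : ∀ w ∈ Set.Iic (-c₁),
              (ENNReal.ofReal (f 0 - c) * ENNReal.ofReal (2 * (-s))) * ENNReal.ofReal (-w⁻¹)
                ≤ μU {u | w * |u| ∈ Set.Ico s 0} := by
            intro w hw
            have hw0 := hw_all w hw
            obtain ⟨ht0, htδ⟩ := ht_all w hw
            rw [hslice w hw]
            have hsub2 : Set.Ioo (-(s/w)) (s/w) ⊆ {u : ℝ | 0 < |u| ∧ |u| ≤ s / w} ∪ {0} := by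
              intro u hu
              rcases eq_or_ne u 0 with rfl | hu0
              · exact Or.inr rfl
              · exact Or.inl ⟨abs_pos.mpr hu0, (abs_lt.mpr ⟨hu.1, hu.2⟩).le⟩
            have h1 : μU (Set.Ioo (-(s/w)) (s/w)) ≤ μU {u : ℝ | 0 < |u| ∧ |u| ≤ s / w} := by
              calc μU (Set.Ioo (-(s/w)) (s/w))
                  ≤ μU ({u : ℝ | 0 < |u| ∧ |u| ≤ s / w} ∪ {0}) := measure_mono hsub2
                _ ≤ μU {u : ℝ | 0 < |u| ∧ |u| ≤ s / w} + μU {0} := measure_union_le _ _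
                _ = μU {u : ℝ | 0 < |u| ∧ |u| ≤ s / w} := by rw [hμU0, add_zero]
            calc (ENNReal.ofReal (f 0 - c) * ENNReal.ofReal (2 * (-s))) * ENNReal.ofReal (-w⁻¹)
                = ENNReal.ofReal (f 0 - c) * ENNReal.ofReal (2 * (s/w)) := by
                  rw [mul_assoc, ← ENNReal.ofReal_mul (by linarith : (0:ℝ) ≤ 2 * (-s))]
                  congr 2
                  rw [div_eq_mul_inv]
                  ring
              _ ≤ μU (Set.Ioo (-(s/w)) (s/w)) := hIooBound _ ht0 htδ
              _ ≤ μU {u : ℝ | 0 < |u| ∧ |u| ≤ s / w} := h1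
          have hE : ENNReal.ofReal ((f 0 - c) * (-s)) ≤ ν (Set.Ico s 0) := by
            rw [hν1]
            calc ENNReal.ofReal ((f 0 - c) * (-s))
                = (ENNReal.ofReal (f 0 - c) * ENNReal.ofReal (2 * (-s))) * ENNReal.ofReal (1/2) := by
                  rw [← ENNReal.ofReal_mul h.le, ← ENNReal.ofReal_mul (by nlinarith)]
                  congr 1
                  ring
              _ = (ENNReal.ofReal (f 0 - c) * ENNReal.ofReal (2 * (-s)))
                    * ∫⁻ w in Set.Iic (-c₁), ENNReal.ofReal (-w⁻¹) ∂μW := by rw [hJneg]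
              _ = ∫⁻ w in Set.Iic (-c₁),
                    (ENNReal.ofReal (f 0 - c) * ENNReal.ofReal (2 * (-s)))
                      * ENNReal.ofReal (-w⁻¹) ∂μW := (lintegral_const_mul _ hmeasInvNeg).symm
              _ ≤ ∫⁻ w in Set.Iic (-c₁), μU {u | w * |u| ∈ Set.Ico s 0} ∂μW :=
                  setLIntegral_mono' measurableSet_Iic hge
          have := ENNReal.toReal_mono (measure_ne_top _ _) hE
          rwa [ENNReal.toReal_ofReal (by nlinarith)] at this
      rw [hφs, abs_of_neg hs0]
      rw [abs_le]
      constructor <;> nlinarith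
    · -- case s = 0
      simp [hφdef]
    · -- case s > 0
      have hsplitν : ν (Set.Iio s) = ν (Set.Iio 0) + ν (Set.Ico 0 s) := by
        rw [← Set.Iio_union_Ico_eq_Iio hs0.le, measure_union ?_ measurableSet_Ico]
        rw [Set.disjoint_left]
        intro x hx hx2
        exact absurd hx2.1 (not_le.mpr hx)
      have hφs : φ s = -(ν (Set.Ico 0 s)).toReal := by
        simp only [hφdef]
        rw [hsplitν, ENNReal.toReal_add (measure_ne_top _ _) (measure_ne_top _ _)]
        ring
      have hw_all : ∀ w ∈ Set.Ici c₂, 0 < w := fun w hw => lt_of_lt_of_le hc₂ hw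
      have ht_all : ∀ w ∈ Set.Ici c₂, 0 < s / w ∧ s / w < δ := by
        intro w hw
        have hw0 := hw_all w hw
        have hw' : c₂ ≤ w := hw
        refine ⟨div_pos hs0 hw0, ?_⟩
        rw [div_lt_iff₀ hw0]
        have h1 : δ * c₂ ≤ δ * w := by nlinarith
        have h2 : η ≤ δ * c₂ := min_le_right _ _
        have h3 : s < η := by rw [abs_of_pos hs0] at hsη; linarith
        linarith
      have hslice : ∀ w ∈ Set.Ici c₂,
          {u : ℝ | w * |u| ∈ Set.Ico 0 s} = Set.Ioo (-(s/w)) (s/w) := by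
        intro w hw
        have hw0 := hw_all w hw
        ext u
        simp only [Set.mem_setOf_eq, Set.mem_Ico, Set.mem_Ioo]
        constructor
        · rintro ⟨h1, h2⟩
          have : |u| < s / w := by
            rw [lt_div_iff₀ hw0]
            linarith [mul_comm w |u|]
          exact abs_lt.mp this
        · rintro ⟨h1, h2⟩
          have habs : |u| < s / w := abs_lt.mpr ⟨h1, h2⟩
          have := (lt_div_iff₀ hw0).mp habs
          exact ⟨mul_nonneg hw0.le (abs_nonneg u), by linarith [mul_comm w |u|]⟩
      have hν1 : ν (Set.Ico 0 s)
          = ∫⁻ w in Set.Ici c₂, μU {u | w * |u| ∈ Set.Ico 0 s} ∂μW := by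
        rw [hν_eq _ measurableSet_Ico, hsplit]
        have hzero : ∫⁻ w in Set.Iic (-c₁), μU {u | w * |u| ∈ Set.Ico 0 s} ∂μW = 0 := by
          rw [setLIntegral_congr_fun measurableSet_Iic
            (fun w hw => ?_), lintegral_zero]
          have hw0 : w < 0 := lt_of_le_of_lt hw (by linarith)
          have hsingle : {u : ℝ | w * |u| ∈ Set.Ico 0 s} = {(0:ℝ)} := by
            ext u
            simp only [Set.mem_setOf_eq, Set.mem_Ico, Set.mem_singleton_iff]
            constructor
            · rintro ⟨h1, h2⟩
              by_contra hu
              have hpos : 0 < |u| := abs_pos.mpr hu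
              nlinarith [mul_neg_of_neg_of_pos hw0 hpos]
            · rintro rfl
              simp only [abs_zero, mul_zero]
              exact ⟨le_refl 0, hs0⟩
          rw [hsingle, hμU0]
        rw [hzero, zero_add]
      have hub : ν (Set.Ico 0 s) ≤ ENNReal.ofReal ((f 0 + c) * s) := by
        rw [hν1]
        have hle : ∀ w ∈ Set.Ici c₂, μU {u | w * |u| ∈ Set.Ico 0 s}
            ≤ (ENNReal.ofReal (f 0 + c) * ENNReal.ofReal (2 * s)) * ENNReal.ofReal w⁻¹ := by
          intro w hw
          have hw0 := hw_all w hw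
          obtain ⟨ht0, htδ⟩ := ht_all w hw
          rw [hslice w hw]
          calc μU (Set.Ioo (-(s/w)) (s/w)) ≤ μU (Set.Icc (-(s/w)) (s/w)) :=
                measure_mono Set.Ioo_subset_Icc_self
            _ ≤ ENNReal.ofReal (f 0 + c) * ENNReal.ofReal (2 * (s/w)) := hIccBound _ ht0 htδ
            _ = (ENNReal.ofReal (f 0 + c) * ENNReal.ofReal (2 * s)) * ENNReal.ofReal w⁻¹ := by
                rw [mul_assoc, ← ENNReal.ofReal_mul (by linarith : (0:ℝ) ≤ 2 * s)]
                congr 2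
                rw [div_eq_mul_inv]
                ring
        calc ∫⁻ w in Set.Ici c₂, μU {u | w * |u| ∈ Set.Ico 0 s} ∂μW
            ≤ ∫⁻ w in Set.Ici c₂,
                (ENNReal.ofReal (f 0 + c) * ENNReal.ofReal (2 * s))
                  * ENNReal.ofReal w⁻¹ ∂μW := setLIntegral_mono' measurableSet_Ici hle
          _ = (ENNReal.ofReal (f 0 + c) * ENNReal.ofReal (2 * s))
                * ∫⁻ w in Set.Ici c₂, ENNReal.ofReal w⁻¹ ∂μW :=
              lintegral_const_mul _ hmeasInv
          _ = (ENNReal.ofReal (f 0 + c) * ENNReal.ofReal (2 * s)) * ENNReal.ofReal (1/2) := by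
              rw [hJpos]
          _ = ENNReal.ofReal ((f 0 + c) * s) := by
              rw [← ENNReal.ofReal_mul hf0c, ← ENNReal.ofReal_mul (by nlinarith)]
              congr 1
              ring
      have hubR : (ν (Set.Ico 0 s)).toReal ≤ (f 0 + c) * s := by
        have := ENNReal.toReal_mono ENNReal.ofReal_ne_top hub
        rwa [ENNReal.toReal_ofReal (by nlinarith)] at this
      have hlbR : (f 0 - c) * s ≤ (ν (Set.Ico 0 s)).toReal := by
        rcases le_or_gt (f 0 - c) 0 with h | h
        · exact le_trans (by nlinarith) ENNReal.toReal_nonneg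
        · have hge : ∀ w ∈ Set.Ici c₂,
              (ENNReal.ofReal (f 0 - c) * ENNReal.ofReal (2 * s)) * ENNReal.ofReal w⁻¹
                ≤ μU {u | w * |u| ∈ Set.Ico 0 s} := by
            intro w hw
            have hw0 := hw_all w hw
            obtain ⟨ht0, htδ⟩ := ht_all w hw
            rw [hslice w hw]
            calc (ENNReal.ofReal (f 0 - c) * ENNReal.ofReal (2 * s)) * ENNReal.ofReal w⁻¹
                = ENNReal.ofReal (f 0 - c) * ENNReal.ofReal (2 * (s/w)) := by
                  rw [mul_assoc, ← ENNReal.ofReal_mul (by linarith : (0:ℝ) ≤ 2 * s)]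
                  congr 2
                  rw [div_eq_mul_inv]
                  ring
              _ ≤ μU (Set.Ioo (-(s/w)) (s/w)) := hIooBound _ ht0 htδ
          have hE : ENNReal.ofReal ((f 0 - c) * s) ≤ ν (Set.Ico 0 s) := by
            rw [hν1]
            calc ENNReal.ofReal ((f 0 - c) * s)
                = (ENNReal.ofReal (f 0 - c) * ENNReal.ofReal (2 * s)) * ENNReal.ofReal (1/2) := by
                  rw [← ENNReal.ofReal_mul h.le, ← ENNReal.ofReal_mul (by nlinarith)]
                  congr 1
                  ring
              _ = (ENNReal.ofReal (f 0 - c) * ENNReal.ofReal (2 * s))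
                    * ∫⁻ w in Set.Ici c₂, ENNReal.ofReal w⁻¹ ∂μW := by rw [hJpos]
              _ = ∫⁻ w in Set.Ici c₂,
                    (ENNReal.ofReal (f 0 - c) * ENNReal.ofReal (2 * s))
                      * ENNReal.ofReal w⁻¹ ∂μW := (lintegral_const_mul _ hmeasInv).symm
              _ ≤ ∫⁻ w in Set.Ici c₂, μU {u | w * |u| ∈ Set.Ico 0 s} ∂μW :=
                  setLIntegral_mono' measurableSet_Ici hge
          have := ENNReal.toReal_mono (measure_ne_top _ _) hE
          rwa [ENNReal.toReal_ofReal (by nlinarith)] at this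
      rw [hφs, abs_of_pos hs0]
      rw [abs_le]
      constructor <;> nlinarith
  have hev : ∀ᶠ a : ℝ in nhds 0, |a| < η := by
    have := Metric.ball_mem_nhds (0 : ℝ) hη
    refine Filter.eventually_of_mem this ?_
    intro a ha
    simpa [Real.dist_eq] using ha
  filter_upwards [hev] with a ha
  rw [hkey a]
  have hmono : Monotone (fun s => (ν (Set.Iio s)).toReal) := fun s t hst =>
    ENNReal.toReal_mono (measure_ne_top _ _) (measure_mono (Set.Iio_subset_Iio hst))
  have hφint : IntervalIntegrable φ volume 0 a := by
    have h1 : IntervalIntegrable (fun s => (ν (Set.Iio s)).toReal) volume 0 a :=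
      hmono.intervalIntegrable
    have h2 : IntervalIntegrable (fun _ : ℝ => (ν (Set.Iio 0)).toReal) volume 0 a :=
      intervalIntegrable_const
    exact h2.sub h1
  have hlin : (∫ s in (0:ℝ)..a, φ s) + f 0 / 2 * a ^ 2
      = ∫ s in (0:ℝ)..a, (φ s + f 0 * s) := by
    rw [intervalIntegral.integral_add hφint
      (IntervalIntegrable.const_mul (intervalIntegral.intervalIntegrable_id) (f 0)),
      intervalIntegral.integral_const_mul, integral_id]
    ring
  rw [hlin]
  have hb : ∀ s ∈ Set.uIoc (0:ℝ) a, ‖φ s + f 0 * s‖ ≤ c * |a| := by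
    intro s hs
    have hs' : |s| ≤ |a| := by
      rcases Set.mem_uIoc.mp hs with h | h
      · rw [abs_of_pos h.1, abs_of_pos (lt_of_lt_of_le h.1 h.2)]; exact h.2
      · rw [abs_of_nonpos h.2, abs_of_neg (lt_of_lt_of_le h.1 h.2 : a < 0)]
        linarith [h.1]
    have := hψ s (lt_of_le_of_lt hs' ha)
    calc ‖φ s + f 0 * s‖ ≤ c * |s| := this
      _ ≤ c * |a| := by nlinarith [abs_nonneg s]
  calc ‖∫ s in (0:ℝ)..a, (φ s + f 0 * s)‖ ≤ c * |a| * |a - 0| :=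
        intervalIntegral.norm_integral_le_of_norm_le_const hb
    _ ≤ c * ‖a ^ 2‖ := by
        rw [sub_zero, Real.norm_eq_abs, abs_pow]
        calc c * |a| * |a| = c * (|a| * |a|) := by ring
          _ = c * |a| ^ 2 := by ring
          _ ≤ c * |a| ^ 2 := le_refl _
end

section
/- Let U be a real random variable with an absolutely continuous distribution whose Lebesgue density f is bounded, Lipschitz continuous in a neighborhood of 0, and bounded away from 0 near 0, and let W be a real random variable independent of U whose distribution μ satisfies: (i) μ is supported in (−∞, −c₁] ∪ [c₂, ∞) for some constants c₁ > 0, c₂ > 0; and (ii) ∫_{(0,∞)} w^{−1} dμ(w) = 1/2 and ∫_{(−∞,0)} w^{−1} dμ(w) = −1/2. Fix τ ∈ (0,1). Then, as (a, b) → (0, 0) in ℝ², E[ ψ_τ(W·|U + a| − b) − ψ_τ(W·|U + a|) ] = −f(0)·b + O((|a| + |b|)²). -/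
open MeasureTheory ProbabilityTheory Filter Asymptotics

private lemma score_diff_eq (τ x b : ℝ) :
    scoreFn τ (x - b) - scoreFn τ x
      = (if x < 0 then (1:ℝ) else 0) - (if x < b then 1 else 0) := by
  simp only [scoreFn, sub_neg]
  ring

private lemma lip_bound {f : ℝ → ℝ} {ε : ℝ} {K : NNReal}
    (hK : LipschitzOnWith K f (Metric.ball (0:ℝ) ε)) (hε : 0 < ε)
    {x r : ℝ} (hx : |x| ≤ r) (hr : r < ε) : |f x - f 0| ≤ K * r := by
  have hxb : x ∈ Metric.ball (0:ℝ) ε := by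
    rw [Metric.mem_ball, Real.dist_eq, sub_zero]; linarith
  have h0b : (0:ℝ) ∈ Metric.ball (0:ℝ) ε := by simpa using hε
  have := hK.dist_le_mul x hxb 0 h0b
  rw [Real.dist_eq, Real.dist_eq, sub_zero] at this
  calc |f x - f 0| ≤ K * |x| := this
    _ ≤ K * r := by
        have : (0:ℝ) ≤ K := K.coe_nonneg
        nlinarith

private lemma density_Icc_le {f : ℝ → ℝ} {ε : ℝ} {K : NNReal}
    (hK : LipschitzOnWith K f (Metric.ball (0:ℝ) ε)) (hε : 0 < ε)
    {c ρ R : ℝ} (hρ : 0 ≤ ρ) (hcρ : |c| + ρ ≤ R) (hR : R < ε) :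
    (volume.withDensity fun x => ENNReal.ofReal (f x)) (Set.Icc (c - ρ) (c + ρ))
      ≤ ENNReal.ofReal ((f 0 + K * R) * (2 * ρ)) := by
  rw [withDensity_apply _ measurableSet_Icc]
  have h1 : ∀ x ∈ Set.Icc (c - ρ) (c + ρ),
      ENNReal.ofReal (f x) ≤ ENNReal.ofReal (f 0 + K * R) := by
    intro x hx
    apply ENNReal.ofReal_le_ofReal
    have hxr : |x| ≤ R := by
      have h2 : |x - c| ≤ ρ := abs_sub_le_iff.2 ⟨by linarith [hx.2], by linarith [hx.1]⟩
      calc |x| = |c + (x - c)| := by ring_nf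
        _ ≤ |c| + |x - c| := abs_add_le _ _
        _ ≤ R := by linarith
    have := lip_bound hK hε hxr hR
    have := abs_le.1 this
    linarith [this.2]
  calc ∫⁻ x in Set.Icc (c - ρ) (c + ρ), ENNReal.ofReal (f x)
      ≤ ∫⁻ _x in Set.Icc (c - ρ) (c + ρ), ENNReal.ofReal (f 0 + K * R) :=
        lintegral_mono_ae (ae_restrict_of_forall_mem measurableSet_Icc h1)
    _ = ENNReal.ofReal (f 0 + K * R) * volume (Set.Icc (c - ρ) (c + ρ)) :=
        setLIntegral_const _ _
    _ = ENNReal.ofReal ((f 0 + K * R) * (2 * ρ)) := by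
        rw [Real.volume_Icc, ← ENNReal.ofReal_mul']
        · congr 1; ring
        · linarith

private lemma le_density_Ioo {f : ℝ → ℝ} {ε : ℝ} {K : NNReal}
    (hK : LipschitzOnWith K f (Metric.ball (0:ℝ) ε)) (hε : 0 < ε)
    {c ρ R : ℝ} (hρ : 0 ≤ ρ) (hcρ : |c| + ρ ≤ R) (hR : R < ε) :
    ENNReal.ofReal ((f 0 - K * R) * (2 * ρ))
      ≤ (volume.withDensity fun x => ENNReal.ofReal (f x)) (Set.Ioo (c - ρ) (c + ρ)) := by
  rw [withDensity_apply _ measurableSet_Ioo]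
  have h1 : ∀ x ∈ Set.Ioo (c - ρ) (c + ρ),
      ENNReal.ofReal (f 0 - K * R) ≤ ENNReal.ofReal (f x) := by
    intro x hx
    apply ENNReal.ofReal_le_ofReal
    have hxr : |x| ≤ R := by
      have h2 : |x - c| ≤ ρ := abs_sub_le_iff.2 ⟨by linarith [hx.2.le], by linarith [hx.1.le]⟩
      calc |x| = |c + (x - c)| := by ring_nf
        _ ≤ |c| + |x - c| := abs_add_le _ _
        _ ≤ R := by linarith
    have := (abs_le.1 (lip_bound hK hε hxr hR)).1
    linarith
  calc ENNReal.ofReal ((f 0 - K * R) * (2 * ρ))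
      = ENNReal.ofReal (f 0 - K * R) * ENNReal.ofReal (2 * ρ) :=
        ENNReal.ofReal_mul' (by linarith)
    _ = ENNReal.ofReal (f 0 - K * R) * volume (Set.Ioo (c - ρ) (c + ρ)) := by
        rw [Real.volume_Ioo]; congr 1; ring_nf
    _ = ∫⁻ _x in Set.Ioo (c - ρ) (c + ρ), ENNReal.ofReal (f 0 - K * R) :=
        (setLIntegral_const _ _).symm
    _ ≤ ∫⁻ x in Set.Ioo (c - ρ) (c + ρ), ENNReal.ofReal (f x) :=
        lintegral_mono_ae (ae_restrict_of_forall_mem measurableSet_Ioo h1)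

private lemma key_identity {Ω : Type*} [MeasurableSpace Ω] (μ : Measure Ω)
    [IsProbabilityMeasure μ]
    (τ : ℝ) (U W : Ω → ℝ) (hU : Measurable U) (hW : Measurable W)
    (hindep : IndepFun U W μ)
    (f : ℝ → ℝ)
    (hf_density : Measure.map U μ
      = MeasureTheory.volume.withDensity (fun x => ENNReal.ofReal (f x)))
    (hzero : Measure.map W μ {0} = 0) (a b : ℝ) :
    (∫ ω, (scoreFn τ (W ω * |U ω + a| - b) - scoreFn τ (W ω * |U ω + a|)) ∂μ)
      = (∫⁻ w in Set.Iio (0:ℝ),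
            (Measure.map U μ) {u : ℝ | |u + a| ≤ b / w} ∂(Measure.map W μ)).toReal
        - (∫⁻ w in Set.Ici (0:ℝ),
            (Measure.map U μ) {u : ℝ | |u + a| < b / w} ∂(Measure.map W μ)).toReal := by
  classical
  haveI hνP : IsProbabilityMeasure (Measure.map W μ) :=
    Measure.isProbabilityMeasure_map hW.aemeasurable
  haveI hμUP : IsProbabilityMeasure (Measure.map U μ) :=
    Measure.isProbabilityMeasure_map hU.aemeasurable
  have hprod : Measure.map (fun ω => (W ω, U ω)) μ
      = (Measure.map W μ).prod (Measure.map U μ) :=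
    (indepFun_iff_map_prod_eq_prod_map_map hW.aemeasurable hU.aemeasurable).1 hindep.symm
  have hatom : ∀ x : ℝ, Measure.map U μ {x} = 0 := by
    intro x
    rw [hf_density, withDensity_apply _ (measurableSet_singleton x),
      Measure.restrict_eq_zero.2 Real.volume_singleton, lintegral_zero_measure]
  have hW0 : ∀ᵐ w ∂(Measure.map W μ), w ≠ 0 := by
    have h := MeasureTheory.measure_eq_zero_iff_ae_notMem.mp hzero
    simpa using h
  have hmap : ∀ t : ℝ,
      μ {ω | W ω * |U ω + a| < t}
        = ∫⁻ w, Measure.map U μ {u | w * |u + a| < t} ∂(Measure.map W μ) := by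
    intro t
    have hS : MeasurableSet {p : ℝ × ℝ | p.1 * |p.2 + a| < t} :=
      measurableSet_lt (measurable_fst.mul ((measurable_snd.add_const a).abs))
        measurable_const
    have h1 : {ω | W ω * |U ω + a| < t}
        = (fun ω => (W ω, U ω)) ⁻¹' {p : ℝ × ℝ | p.1 * |p.2 + a| < t} := rfl
    rw [h1, ← Measure.map_apply (hW.prodMk hU) hS, hprod, Measure.prod_apply hS]
    rfl
  have hsplit : ∀ t : ℝ,
      μ {ω | W ω * |U ω + a| < t}
        = (∫⁻ w in Set.Iio (0:ℝ),
            Measure.map U μ ({u : ℝ | |u + a| ≤ t / w})ᶜ ∂(Measure.map W μ))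
          + ∫⁻ w in Set.Ici (0:ℝ),
            Measure.map U μ {u : ℝ | |u + a| < t / w} ∂(Measure.map W μ) := by
    intro t
    rw [hmap t, ← lintegral_add_compl (fun w => Measure.map U μ {u | w * |u + a| < t})
      (measurableSet_Iio (a := (0:ℝ))), Set.compl_Iio]
    congr 1
    · apply setLIntegral_congr_fun_ae measurableSet_Iio
      filter_upwards with w hw
      congr 1
      ext u
      simp only [Set.mem_setOf_eq, Set.mem_compl_iff, not_le]
      rw [div_lt_iff_of_neg hw, mul_comm]
    · apply setLIntegral_congr_fun_ae measurableSet_Ici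
      filter_upwards [hW0] with w hw0 hw
      have hwpos : 0 < w := lt_of_le_of_ne hw (Ne.symm hw0)
      congr 1
      ext u
      simp only [Set.mem_setOf_eq]
      rw [lt_div_iff₀ hwpos, mul_comm]
  have hA : μ {ω | W ω * |U ω + a| < 0} = Measure.map W μ (Set.Iio 0) := by
    rw [hsplit 0]
    have h1 : ∫⁻ w in Set.Ici (0:ℝ),
        Measure.map U μ {u : ℝ | |u + a| < 0 / w} ∂(Measure.map W μ) = 0 := by
      have hv : ∀ w : ℝ, Measure.map U μ {u : ℝ | |u + a| < 0 / w} = 0 := by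
        intro w
        have hset : {u : ℝ | |u + a| < 0 / w} = ∅ := by
          ext u
          simp only [Set.mem_setOf_eq, zero_div, Set.mem_empty_iff_false, iff_false, not_lt]
          exact abs_nonneg _
        rw [hset, measure_empty]
      simp only [hv]
      simp
    have h2 : (∫⁻ w in Set.Iio (0:ℝ),
        Measure.map U μ ({u : ℝ | |u + a| ≤ 0 / w})ᶜ ∂(Measure.map W μ))
        = Measure.map W μ (Set.Iio 0) := by
      have hval : ∀ w : ℝ, Measure.map U μ ({u : ℝ | |u + a| ≤ 0 / w})ᶜ = 1 := by
        intro w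
        have hset : {u : ℝ | |u + a| ≤ 0 / w} = {-a} := by
          ext u
          simp only [Set.mem_setOf_eq, zero_div, Set.mem_singleton_iff]
          constructor
          · intro h
            have h0 : |u + a| = 0 := le_antisymm h (abs_nonneg _)
            have := abs_eq_zero.1 h0
            linarith
          · intro h; subst h; simp
        rw [hset, measure_compl (measurableSet_singleton _) (measure_ne_top _ _),
          hatom, measure_univ, tsub_zero]
      simp only [hval]
      simp
    rw [h1, h2, add_zero]
  have hB : μ {ω | W ω * |U ω + a| < b}
      + ∫⁻ w in Set.Iio (0:ℝ),
          Measure.map U μ {u : ℝ | |u + a| ≤ b / w} ∂(Measure.map W μ)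
      = Measure.map W μ (Set.Iio 0)
      + ∫⁻ w in Set.Ici (0:ℝ),
          Measure.map U μ {u : ℝ | |u + a| < b / w} ∂(Measure.map W μ) := by
    rw [hsplit b]
    have hmeasG : Measurable fun w : ℝ => Measure.map U μ {u : ℝ | |u + a| ≤ b / w} := by
      have hS : MeasurableSet {p : ℝ × ℝ | |p.2 + a| ≤ b / p.1} :=
        measurableSet_le ((measurable_snd.add_const a).abs)
          (measurable_const.div measurable_fst)
      exact measurable_measure_prodMk_left hS
    have hsum : (∫⁻ w in Set.Iio (0:ℝ),
          Measure.map U μ ({u : ℝ | |u + a| ≤ b / w})ᶜ ∂(Measure.map W μ))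
        + ∫⁻ w in Set.Iio (0:ℝ),
          Measure.map U μ {u : ℝ | |u + a| ≤ b / w} ∂(Measure.map W μ)
        = Measure.map W μ (Set.Iio 0) := by
      rw [← lintegral_add_right' _ hmeasG.aemeasurable.restrict]
      have hone : ∀ w : ℝ, Measure.map U μ ({u : ℝ | |u + a| ≤ b / w})ᶜ
          + Measure.map U μ {u : ℝ | |u + a| ≤ b / w} = 1 := by
        intro w
        have hSw : MeasurableSet {u : ℝ | |u + a| ≤ b / w} :=
          measurableSet_le ((measurable_id.add_const a).abs) measurable_const
        rw [add_comm, measure_add_measure_compl hSw, measure_univ]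
      simp only [hone]
      simp
    calc (∫⁻ w in Set.Iio (0:ℝ),
            Measure.map U μ ({u : ℝ | |u + a| ≤ b / w})ᶜ ∂(Measure.map W μ))
          + (∫⁻ w in Set.Ici (0:ℝ),
            Measure.map U μ {u : ℝ | |u + a| < b / w} ∂(Measure.map W μ))
          + ∫⁻ w in Set.Iio (0:ℝ),
            Measure.map U μ {u : ℝ | |u + a| ≤ b / w} ∂(Measure.map W μ)
        = ((∫⁻ w in Set.Iio (0:ℝ),
            Measure.map U μ ({u : ℝ | |u + a| ≤ b / w})ᶜ ∂(Measure.map W μ))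
          + ∫⁻ w in Set.Iio (0:ℝ),
            Measure.map U μ {u : ℝ | |u + a| ≤ b / w} ∂(Measure.map W μ))
          + ∫⁻ w in Set.Ici (0:ℝ),
            Measure.map U μ {u : ℝ | |u + a| < b / w} ∂(Measure.map W μ) := by ring
      _ = Measure.map W μ (Set.Iio 0)
          + ∫⁻ w in Set.Ici (0:ℝ),
            Measure.map U μ {u : ℝ | |u + a| < b / w} ∂(Measure.map W μ) := by rw [hsum]
  have hABmeas : ∀ t : ℝ, MeasurableSet {ω | W ω * |U ω + a| < t} := fun t =>
    measurableSet_lt (hW.mul ((hU.add_const a).abs)) measurable_const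
  have hI : (∫ ω, (scoreFn τ (W ω * |U ω + a| - b) - scoreFn τ (W ω * |U ω + a|)) ∂μ)
      = (μ {ω | W ω * |U ω + a| < 0}).toReal
        - (μ {ω | W ω * |U ω + a| < b}).toReal := by
    have heq : ∀ ω, scoreFn τ (W ω * |U ω + a| - b) - scoreFn τ (W ω * |U ω + a|)
        = Set.indicator {ω | W ω * |U ω + a| < 0} (1 : Ω → ℝ) ω
          - Set.indicator {ω | W ω * |U ω + a| < b} (1 : Ω → ℝ) ω := by
      intro ω
      rw [score_diff_eq]
      simp [Set.indicator_apply]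
    simp_rw [heq]
    rw [integral_sub, integral_indicator_one (hABmeas 0), integral_indicator_one (hABmeas b)]
    · rfl
    · exact (integrable_indicator_iff (hABmeas 0)).2
        (integrableOn_const (C := (1:ℝ)) (measure_ne_top μ _))
    · exact (integrable_indicator_iff (hABmeas b)).2
        (integrableOn_const (C := (1:ℝ)) (measure_ne_top μ _))
  have hfin1 : (∫⁻ w in Set.Iio (0:ℝ),
      Measure.map U μ {u : ℝ | |u + a| ≤ b / w} ∂(Measure.map W μ)) ≠ ⊤ := by
    apply ne_of_lt
    calc (∫⁻ w in Set.Iio (0:ℝ),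
          Measure.map U μ {u : ℝ | |u + a| ≤ b / w} ∂(Measure.map W μ))
        ≤ ∫⁻ _w in Set.Iio (0:ℝ), 1 ∂(Measure.map W μ) :=
          lintegral_mono fun w => prob_le_one
      _ = Measure.map W μ (Set.Iio 0) := by simp
      _ < ⊤ := measure_lt_top _ _
  have hfin2 : (∫⁻ w in Set.Ici (0:ℝ),
      Measure.map U μ {u : ℝ | |u + a| < b / w} ∂(Measure.map W μ)) ≠ ⊤ := by
    apply ne_of_lt
    calc (∫⁻ w in Set.Ici (0:ℝ),
          Measure.map U μ {u : ℝ | |u + a| < b / w} ∂(Measure.map W μ))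
        ≤ ∫⁻ _w in Set.Ici (0:ℝ), 1 ∂(Measure.map W μ) :=
          lintegral_mono fun w => prob_le_one
      _ = Measure.map W μ (Set.Ici 0) := by simp
      _ < ⊤ := measure_lt_top _ _
  rw [hI, hA]
  have hBt := congrArg ENNReal.toReal hB
  rw [ENNReal.toReal_add (measure_ne_top _ _) hfin1,
    ENNReal.toReal_add (measure_ne_top _ _) hfin2] at hBt
  linarith

private lemma lint_pos (ν : Measure ℝ) [IsProbabilityMeasure ν] {c₁ c₂ : ℝ}
    (hc₁ : 0 < c₁) (hc₂ : 0 < c₂)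
    (hsupp : ν (Set.Ioo (-c₁) c₂) = 0)
    (hpos : ∫ w in Set.Ioi (0:ℝ), w⁻¹ ∂ν = 1 / 2)
    {d b : ℝ} (hd : 0 ≤ d) (hb : 0 ≤ b) :
    ∫⁻ w in Set.Ici (0:ℝ), ENNReal.ofReal (d * (2 * (b / w))) ∂ν
      = ENNReal.ofReal (d * b) := by
  have hsuppae : ∀ᵐ w ∂ν, w ∉ Set.Ioo (-c₁) c₂ := measure_eq_zero_iff_ae_notMem.mp hsupp
  have h0 : ν {0} = 0 := by
    apply measure_mono_null _ hsupp
    intro x hx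
    simp only [Set.mem_singleton_iff] at hx
    subst hx
    exact ⟨neg_lt_zero.2 hc₁, hc₂⟩
  have hmeas : AEStronglyMeasurable (fun w : ℝ => w⁻¹) (ν.restrict (Set.Ioi 0)) :=
    measurable_inv.aestronglyMeasurable
  have hbd : ∀ᵐ w ∂ν.restrict (Set.Ioi 0), ‖w⁻¹‖ ≤ c₂⁻¹ := by
    rw [ae_restrict_iff' measurableSet_Ioi]
    filter_upwards [hsuppae] with w hw hw0
    have hwc : c₂ ≤ w := by
      by_contra h
      push_neg at h
      exact hw ⟨by simp only [Set.mem_Ioi] at hw0; linarith, h⟩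
    rw [Real.norm_eq_abs, abs_of_pos (inv_pos.2 (lt_of_lt_of_le hc₂ hwc))]
    exact inv_anti₀ hc₂ hwc
  have hint : IntegrableOn (fun w : ℝ => w⁻¹) (Set.Ioi 0) ν :=
    Integrable.mono' (integrable_const c₂⁻¹) hmeas hbd
  have hnn : (0 : ℝ → ℝ) ≤ᶠ[ae (ν.restrict (Set.Ioi 0))] fun w : ℝ => w⁻¹ :=
    ae_restrict_of_forall_mem measurableSet_Ioi fun w hw => inv_nonneg.2 (le_of_lt hw)
  have hcore : ∫⁻ w in Set.Ici (0:ℝ), ENNReal.ofReal w⁻¹ ∂ν = ENNReal.ofReal (1 / 2) := by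
    rw [← setLIntegral_congr (Ioi_ae_eq_Ici' h0),
      ← ofReal_integral_eq_lintegral_ofReal hint hnn, hpos]
  have hrw : ∀ w : ℝ, d * (2 * (b / w)) = (2 * d * b) * w⁻¹ := by
    intro w; rw [div_eq_mul_inv]; ring
  simp_rw [hrw, ENNReal.ofReal_mul (by positivity : (0:ℝ) ≤ 2 * d * b)]
  rw [lintegral_const_mul'' _ (measurable_inv.ennreal_ofReal.aemeasurable.restrict), hcore,
    ← ENNReal.ofReal_mul (by positivity : (0:ℝ) ≤ 2 * d * b)]
  congr 1
  ring

private lemma lint_neg (ν : Measure ℝ) [IsProbabilityMeasure ν] {c₁ c₂ : ℝ}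
    (hc₁ : 0 < c₁) (hc₂ : 0 < c₂)
    (hsupp : ν (Set.Ioo (-c₁) c₂) = 0)
    (hneg : ∫ w in Set.Iio (0:ℝ), w⁻¹ ∂ν = -(1 / 2))
    {d b : ℝ} (hd : 0 ≤ d) (hb : b ≤ 0) :
    ∫⁻ w in Set.Iio (0:ℝ), ENNReal.ofReal (d * (2 * (b / w))) ∂ν
      = ENNReal.ofReal (d * (-b)) := by
  have hsuppae : ∀ᵐ w ∂ν, w ∉ Set.Ioo (-c₁) c₂ := measure_eq_zero_iff_ae_notMem.mp hsupp
  have hmeas : AEStronglyMeasurable (fun w : ℝ => w⁻¹) (ν.restrict (Set.Iio 0)) :=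
    measurable_inv.aestronglyMeasurable
  have hbd : ∀ᵐ w ∂ν.restrict (Set.Iio 0), ‖w⁻¹‖ ≤ c₁⁻¹ := by
    rw [ae_restrict_iff' measurableSet_Iio]
    filter_upwards [hsuppae] with w hw hw0
    have hwc : w ≤ -c₁ := by
      by_contra h
      push_neg at h
      exact hw ⟨h, by simp only [Set.mem_Iio] at hw0; linarith⟩
    rw [Real.norm_eq_abs, abs_inv, abs_of_neg (by simp only [Set.mem_Iio] at hw0; exact hw0)]
    rw [inv_le_inv₀ (by linarith) hc₁]
    linarith
  have hint : IntegrableOn (fun w : ℝ => w⁻¹) (Set.Iio 0) ν :=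
    Integrable.mono' (integrable_const c₁⁻¹) hmeas hbd
  have hintn : IntegrableOn (fun w : ℝ => -(w⁻¹)) (Set.Iio 0) ν := hint.neg
  have hnn : (0 : ℝ → ℝ) ≤ᶠ[ae (ν.restrict (Set.Iio 0))] fun w : ℝ => -(w⁻¹) :=
    ae_restrict_of_forall_mem measurableSet_Iio fun w hw => by
      simp only [Set.mem_Iio] at hw
      show (0:ℝ) ≤ -(w⁻¹)
      simp only [Left.nonneg_neg_iff]
      exact inv_nonpos.2 hw.le
  have hval : ∫ w in Set.Iio (0:ℝ), -(w⁻¹) ∂ν = 1 / 2 := by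
    rw [integral_neg, hneg]; ring
  have hcore : ∫⁻ w in Set.Iio (0:ℝ), ENNReal.ofReal (-(w⁻¹)) ∂ν
      = ENNReal.ofReal (1 / 2) := by
    rw [← ofReal_integral_eq_lintegral_ofReal hintn hnn, hval]
  have hrw : ∀ w : ℝ, d * (2 * (b / w)) = (2 * d * (-b)) * (-(w⁻¹)) := by
    intro w; rw [div_eq_mul_inv]; ring
  simp_rw [hrw, ENNReal.ofReal_mul (by nlinarith : (0:ℝ) ≤ 2 * d * (-b))]
  rw [lintegral_const_mul'' (f := fun w : ℝ => ENNReal.ofReal (-(w⁻¹))) _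
      (measurable_inv.neg.ennreal_ofReal.aemeasurable.restrict), hcore,
    ← ENNReal.ofReal_mul (by nlinarith : (0:ℝ) ≤ 2 * d * (-b))]
  congr 1
  ring

set_option maxHeartbeats 1000000

/-- First-order expansion of the expected wild-bootstrap score increment
(part 2 of Lemma S.3): if `U` has a density `f` which is bounded, Lipschitz near `0`
and bounded away from `0` near `0`, and `W` is independent of `U` with distribution
supported away from `0` whose signed reciprocal moments on the two half-lines are
`±1/2`, then as `(a, b) → (0, 0)`,
`E[ψ_τ(W|U + a| − b) − ψ_τ(W|U + a|)] = −f(0)·b + O((|a| + |b|)²)`. -/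
theorem wild_bootstrap_expansion_score
    {Ω : Type*} [MeasurableSpace Ω] (μ : Measure Ω) [IsProbabilityMeasure μ]
    (τ : ℝ) (hτ : τ ∈ Set.Ioo (0 : ℝ) 1)
    (U W : Ω → ℝ) (hU : Measurable U) (hW : Measurable W)
    (hindep : IndepFun U W μ)
    (f : ℝ → ℝ) (hf_nonneg : ∀ x, 0 ≤ f x)
    (hf_density : Measure.map U μ
      = MeasureTheory.volume.withDensity (fun x => ENNReal.ofReal (f x)))
    (hf_bdd : ∃ C : ℝ, ∀ x, f x ≤ C)
    (hf_lip : ∃ ε > (0 : ℝ), ∃ K : NNReal, LipschitzOnWith K f (Metric.ball (0 : ℝ) ε))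
    (hf_pos : ∃ δ > (0 : ℝ), ∃ c > (0 : ℝ), ∀ x ∈ Metric.ball (0 : ℝ) δ, c ≤ f x)
    (c₁ c₂ : ℝ) (hc₁ : 0 < c₁) (hc₂ : 0 < c₂)
    (hsupp : Measure.map W μ (Set.Ioo (-c₁) c₂) = 0)
    (hpos : ∫ w in Set.Ioi (0 : ℝ), w⁻¹ ∂(Measure.map W μ) = 1 / 2)
    (hneg : ∫ w in Set.Iio (0 : ℝ), w⁻¹ ∂(Measure.map W μ) = -(1 / 2)) :
    (fun q : ℝ × ℝ =>
        (∫ ω, (scoreFn τ (W ω * |U ω + q.1| - q.2)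
            - scoreFn τ (W ω * |U ω + q.1|)) ∂μ)
          + f 0 * q.2)
      =O[nhds ((0 : ℝ), (0 : ℝ))] (fun q => (|q.1| + |q.2|) ^ 2) := by
  classical
  obtain ⟨ε, hε, K, hK⟩ := hf_lip
  haveI hνP : IsProbabilityMeasure (Measure.map W μ) :=
    Measure.isProbabilityMeasure_map hW.aemeasurable
  haveI hμUP : IsProbabilityMeasure (Measure.map U μ) :=
    Measure.isProbabilityMeasure_map hU.aemeasurable
  have hsuppae : ∀ᵐ w ∂(Measure.map W μ), w ∉ Set.Ioo (-c₁) c₂ :=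
    measure_eq_zero_iff_ae_notMem.mp hsupp
  have hzero : Measure.map W μ {0} = 0 := by
    apply measure_mono_null _ hsupp
    intro x hx
    simp only [Set.mem_singleton_iff] at hx
    subst hx
    exact ⟨neg_lt_zero.2 hc₁, hc₂⟩
  have hatom : ∀ x : ℝ, Measure.map U μ {x} = 0 := by
    intro x
    rw [hf_density, withDensity_apply _ (measurableSet_singleton x),
      Measure.restrict_eq_zero.2 Real.volume_singleton, lintegral_zero_measure]
  have hf00 : 0 ≤ f 0 := hf_nonneg 0
  have hc₁i : 0 < c₁⁻¹ := inv_pos.2 hc₁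
  have hc₂i : 0 < c₂⁻¹ := inv_pos.2 hc₂
  rw [isBigO_iff]
  refine ⟨(K : ℝ) * (1 + c₁⁻¹ + c₂⁻¹), ?_⟩
  rw [Metric.eventually_nhds_iff]
  refine ⟨(ε / 2) * min 1 (min c₁ c₂), by positivity, ?_⟩
  rintro ⟨a, b⟩ hq
  rw [Prod.dist_eq] at hq
  simp only [Real.dist_eq, sub_zero, sup_lt_iff] at hq
  obtain ⟨ha, hb⟩ := hq
  have hη1 : (ε / 2) * min 1 (min c₁ c₂) ≤ ε / 2 := by
    have h1 : min 1 (min c₁ c₂) ≤ 1 := min_le_left _ _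
    nlinarith
  have hRa : |a| + |b| * c₂⁻¹ < ε := by
    have h2 : |b| * c₂⁻¹ < ((ε / 2) * min 1 (min c₁ c₂)) * c₂⁻¹ :=
      mul_lt_mul_of_pos_right hb hc₂i
    have h3 : ((ε / 2) * min 1 (min c₁ c₂)) * c₂⁻¹ ≤ ε / 2 := by
      have hm : min 1 (min c₁ c₂) ≤ c₂ := le_trans (min_le_right _ _) (min_le_right _ _)
      have : ((ε / 2) * min 1 (min c₁ c₂)) * c₂⁻¹ ≤ ((ε / 2) * c₂) * c₂⁻¹ :=
        mul_le_mul_of_nonneg_right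
          (mul_le_mul_of_nonneg_left hm (by positivity)) hc₂i.le
      calc ((ε / 2) * min 1 (min c₁ c₂)) * c₂⁻¹ ≤ ((ε / 2) * c₂) * c₂⁻¹ := this
        _ = ε / 2 := by field_simp
    linarith
  have hRb : |a| + |b| * c₁⁻¹ < ε := by
    have h2 : |b| * c₁⁻¹ < ((ε / 2) * min 1 (min c₁ c₂)) * c₁⁻¹ :=
      mul_lt_mul_of_pos_right hb hc₁i
    have h3 : ((ε / 2) * min 1 (min c₁ c₂)) * c₁⁻¹ ≤ ε / 2 := by
      have hm : min 1 (min c₁ c₂) ≤ c₁ := le_trans (min_le_right _ _) (min_le_left _ _)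
      have : ((ε / 2) * min 1 (min c₁ c₂)) * c₁⁻¹ ≤ ((ε / 2) * c₁) * c₁⁻¹ :=
        mul_le_mul_of_nonneg_right
          (mul_le_mul_of_nonneg_left hm (by positivity)) hc₁i.le
      calc ((ε / 2) * min 1 (min c₁ c₂)) * c₁⁻¹ ≤ ((ε / 2) * c₁) * c₁⁻¹ := this
        _ = ε / 2 := by field_simp
    linarith
  dsimp only
  rw [key_identity μ τ U W hU hW hindep f hf_density hzero a b]
  rw [Real.norm_eq_abs, Real.norm_eq_abs, abs_of_nonneg (sq_nonneg (|a| + |b|))]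
  rcases le_total 0 b with hb0 | hb0
  · -- case 0 ≤ b
    have hJm0 : (∫⁻ w in Set.Iio (0:ℝ),
        Measure.map U μ {u : ℝ | |u + a| ≤ b / w} ∂(Measure.map W μ)) = 0 := by
      have hz : ∀ᵐ w ∂(Measure.map W μ), w ∈ Set.Iio (0:ℝ) →
          Measure.map U μ {u : ℝ | |u + a| ≤ b / w} = (fun _ => (0:ENNReal)) w := by
        filter_upwards with w hw
        apply measure_mono_null _ (hatom (-a))
        intro u hu
        simp only [Set.mem_setOf_eq] at hu
        have hbw : b / w ≤ 0 := div_nonpos_of_nonneg_of_nonpos hb0 hw.le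
        have h0 : |u + a| = 0 := le_antisymm (le_trans hu hbw) (abs_nonneg _)
        have := abs_eq_zero.1 h0
        simp only [Set.mem_singleton_iff]
        linarith
      rw [setLIntegral_congr_fun_ae measurableSet_Iio hz, lintegral_zero]
    have hbabs : |b| = b := abs_of_nonneg hb0
    set R : ℝ := |a| + b * c₂⁻¹ with hRdef
    have hR0 : 0 ≤ R := by
      have := abs_nonneg a
      have : 0 ≤ b * c₂⁻¹ := mul_nonneg hb0 hc₂i.le
      positivity
    have hRε : R < ε := by rw [hRdef]; rw [← hbabs]; exact hRa
    have haeIci : ∀ᵐ w ∂((Measure.map W μ).restrict (Set.Ici 0)), c₂ ≤ w := by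
      rw [ae_restrict_iff' measurableSet_Ici]
      filter_upwards [hsuppae] with w hw hw0
      by_contra h
      push_neg at h
      exact hw ⟨lt_of_lt_of_le (neg_lt_zero.2 hc₁) hw0, h⟩
    have hsetIoo : ∀ w : ℝ, c₂ ≤ w →
        {u : ℝ | |u + a| < b / w} = Set.Ioo (-a - b / w) (-a + b / w) := by
      intro w hw
      ext u
      simp only [Set.mem_setOf_eq, Set.mem_Ioo, abs_lt]
      constructor
      · intro h; exact ⟨by linarith [h.1], by linarith [h.2]⟩
      · intro h; exact ⟨by linarith [h.1], by linarith [h.2]⟩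
    have hparam : ∀ w : ℝ, c₂ ≤ w → 0 ≤ b / w ∧ |(-a)| + b / w ≤ R := by
      intro w hw
      have hw0 : 0 < w := lt_of_lt_of_le hc₂ hw
      refine ⟨div_nonneg hb0 hw0.le, ?_⟩
      rw [abs_neg]
      have h1 : b / w ≤ b * c₂⁻¹ := by
        rw [div_eq_mul_inv]
        exact mul_le_mul_of_nonneg_left (inv_anti₀ hc₂ hw) hb0
      rw [hRdef]
      linarith
    have hd1 : 0 ≤ f 0 + (K : ℝ) * R := by positivity
    set J : ENNReal := ∫⁻ w in Set.Ici (0:ℝ),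
        Measure.map U μ {u : ℝ | |u + a| < b / w} ∂(Measure.map W μ) with hJdef
    have hub : J
        ≤ ENNReal.ofReal ((f 0 + (K : ℝ) * R) * b) := by
      rw [hJdef]
      calc (∫⁻ w in Set.Ici (0:ℝ),
            Measure.map U μ {u : ℝ | |u + a| < b / w} ∂(Measure.map W μ))
          ≤ ∫⁻ w in Set.Ici (0:ℝ),
            ENNReal.ofReal ((f 0 + (K : ℝ) * R) * (2 * (b / w))) ∂(Measure.map W μ) := by
            apply lintegral_mono_ae
            filter_upwards [haeIci] with w hw
            obtain ⟨hρ, hcρ⟩ := hparam w hw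
            rw [hsetIoo w hw, hf_density]
            calc (volume.withDensity fun x => ENNReal.ofReal (f x))
                  (Set.Ioo (-a - b / w) (-a + b / w))
                ≤ (volume.withDensity fun x => ENNReal.ofReal (f x))
                  (Set.Icc (-a - b / w) (-a + b / w)) :=
                  measure_mono Set.Ioo_subset_Icc_self
              _ ≤ _ := density_Icc_le hK hε hρ hcρ hRε
        _ = ENNReal.ofReal ((f 0 + (K : ℝ) * R) * b) :=
            lint_pos (Measure.map W μ) hc₁ hc₂ hsupp hpos hd1 hb0
    have hfinJ : J ≠ ⊤ :=
      ne_top_of_le_ne_top ENNReal.ofReal_ne_top hub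
    have hTub : J.toReal ≤ (f 0 + (K : ℝ) * R) * b :=
      ENNReal.toReal_le_of_le_ofReal (mul_nonneg hd1 hb0) hub
    have hTlb : (f 0 - (K : ℝ) * R) * b ≤ J.toReal := by
      rcases le_or_gt 0 (f 0 - (K : ℝ) * R) with hcase | hcase
      · have hlb : ENNReal.ofReal ((f 0 - (K : ℝ) * R) * b) ≤ J := by
          rw [hJdef]
          calc ENNReal.ofReal ((f 0 - (K : ℝ) * R) * b)
              = ∫⁻ w in Set.Ici (0:ℝ),
                ENNReal.ofReal ((f 0 - (K : ℝ) * R) * (2 * (b / w))) ∂(Measure.map W μ) :=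
              (lint_pos (Measure.map W μ) hc₁ hc₂ hsupp hpos hcase hb0).symm
            _ ≤ _ := by
                apply lintegral_mono_ae
                filter_upwards [haeIci] with w hw
                obtain ⟨hρ, hcρ⟩ := hparam w hw
                rw [hsetIoo w hw, hf_density]
                exact le_density_Ioo hK hε hρ hcρ hRε
        exact (ENNReal.ofReal_le_iff_le_toReal hfinJ).1 hlb
      · have h0 : (0:ℝ) ≤ J.toReal := ENNReal.toReal_nonneg
        nlinarith [mul_nonneg (by linarith : (0:ℝ) ≤ (K : ℝ) * R - f 0) hb0]
    rw [hJm0]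
    simp only [ENNReal.toReal_zero, zero_sub]
    have habs : |(-J.toReal) + f 0 * b| ≤ (K : ℝ) * R * b := by
      rw [abs_le]
      constructor
      · nlinarith
      · nlinarith
    calc |(-J.toReal) + f 0 * b|
        ≤ (K : ℝ) * R * b := habs
      _ ≤ (K : ℝ) * (1 + c₁⁻¹ + c₂⁻¹) * (|a| + |b|) ^ 2 := by
          rw [hRdef, hbabs]
          nlinarith [K.coe_nonneg, abs_nonneg a, hb0, hc₁i.le, hc₂i.le,
            mul_nonneg K.coe_nonneg (mul_nonneg (abs_nonneg a) hb0),
            mul_nonneg (mul_nonneg K.coe_nonneg hc₁i.le) (mul_nonneg (abs_nonneg a) hb0),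
            mul_nonneg (mul_nonneg K.coe_nonneg hc₂i.le) (mul_nonneg (abs_nonneg a) hb0),
            mul_nonneg (mul_nonneg K.coe_nonneg hc₁i.le) (sq_nonneg b),
            mul_nonneg (mul_nonneg K.coe_nonneg hc₁i.le) (sq_nonneg (|a|)),
            mul_nonneg (mul_nonneg K.coe_nonneg hc₂i.le) (sq_nonneg (|a|)),
            mul_nonneg K.coe_nonneg (sq_nonneg (|a|)),
            mul_nonneg K.coe_nonneg (sq_nonneg b)]
  · -- case b ≤ 0
    have hJp0 : (∫⁻ w in Set.Ici (0:ℝ),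
        Measure.map U μ {u : ℝ | |u + a| < b / w} ∂(Measure.map W μ)) = 0 := by
      have hz : ∀ᵐ w ∂(Measure.map W μ), w ∈ Set.Ici (0:ℝ) →
          Measure.map U μ {u : ℝ | |u + a| < b / w} = (fun _ => (0:ENNReal)) w := by
        filter_upwards with w hw
        have hset : {u : ℝ | |u + a| < b / w} = (∅ : Set ℝ) := by
          ext u
          simp only [Set.mem_setOf_eq, Set.mem_empty_iff_false, iff_false, not_lt]
          rcases eq_or_lt_of_le (Set.mem_Ici.1 hw) with hw0 | hw0
          · rw [← hw0, div_zero]; exact abs_nonneg _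
          · have hbw : b / w ≤ 0 := div_nonpos_of_nonpos_of_nonneg hb0 hw
            exact le_trans hbw (abs_nonneg _)
        rw [hset, measure_empty]
      rw [setLIntegral_congr_fun_ae measurableSet_Ici hz, lintegral_zero]
    have hbabs : |b| = -b := abs_of_nonpos hb0
    set R : ℝ := |a| + (-b) * c₁⁻¹ with hRdef
    have hR0 : 0 ≤ R := by
      have h1 := abs_nonneg a
      have h2 : 0 ≤ (-b) * c₁⁻¹ := mul_nonneg (by linarith) hc₁i.le
      positivity
    have hRε : R < ε := by rw [hRdef, ← hbabs]; exact hRb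
    have haeIio : ∀ᵐ w ∂((Measure.map W μ).restrict (Set.Iio 0)), w ≤ -c₁ := by
      rw [ae_restrict_iff' measurableSet_Iio]
      filter_upwards [hsuppae] with w hw hw0
      by_contra h
      push_neg at h
      exact hw ⟨h, lt_trans hw0 hc₂⟩
    have hsetIcc : ∀ w : ℝ, w ≤ -c₁ →
        {u : ℝ | |u + a| ≤ b / w} = Set.Icc (-a - b / w) (-a + b / w) := by
      intro w hw
      ext u
      simp only [Set.mem_setOf_eq, Set.mem_Icc, abs_le]
      constructor
      · intro h; exact ⟨by linarith [h.1], by linarith [h.2]⟩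
      · intro h; exact ⟨by linarith [h.1], by linarith [h.2]⟩
    have hparam : ∀ w : ℝ, w ≤ -c₁ → 0 ≤ b / w ∧ |(-a)| + b / w ≤ R := by
      intro w hw
      have hw0 : w < 0 := lt_of_le_of_lt hw (neg_lt_zero.2 hc₁)
      have hρ : 0 ≤ b / w := by
        rw [← neg_div_neg_eq]
        exact div_nonneg (by linarith) (by linarith)
      refine ⟨hρ, ?_⟩
      rw [abs_neg]
      have h1 : b / w ≤ (-b) * c₁⁻¹ := by
        rw [← neg_div_neg_eq, div_eq_mul_inv]
        exact mul_le_mul_of_nonneg_left (inv_anti₀ hc₁ (by linarith)) (by linarith)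
      rw [hRdef]
      linarith
    have hd1 : 0 ≤ f 0 + (K : ℝ) * R := by positivity
    set J : ENNReal := ∫⁻ w in Set.Iio (0:ℝ),
        Measure.map U μ {u : ℝ | |u + a| ≤ b / w} ∂(Measure.map W μ) with hJdef
    have hub : J
        ≤ ENNReal.ofReal ((f 0 + (K : ℝ) * R) * (-b)) := by
      rw [hJdef]
      calc (∫⁻ w in Set.Iio (0:ℝ),
            Measure.map U μ {u : ℝ | |u + a| ≤ b / w} ∂(Measure.map W μ))
          ≤ ∫⁻ w in Set.Iio (0:ℝ),
            ENNReal.ofReal ((f 0 + (K : ℝ) * R) * (2 * (b / w))) ∂(Measure.map W μ) := by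
            apply lintegral_mono_ae
            filter_upwards [haeIio] with w hw
            obtain ⟨hρ, hcρ⟩ := hparam w hw
            rw [hsetIcc w hw, hf_density]
            exact density_Icc_le hK hε hρ hcρ hRε
        _ = ENNReal.ofReal ((f 0 + (K : ℝ) * R) * (-b)) :=
            lint_neg (Measure.map W μ) hc₁ hc₂ hsupp hneg hd1 hb0
    have hfinJ : J ≠ ⊤ :=
      ne_top_of_le_ne_top ENNReal.ofReal_ne_top hub
    have hTub : J.toReal ≤ (f 0 + (K : ℝ) * R) * (-b) :=
      ENNReal.toReal_le_of_le_ofReal (mul_nonneg hd1 (by linarith)) hub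
    have hTlb : (f 0 - (K : ℝ) * R) * (-b) ≤ J.toReal := by
      rcases le_or_gt 0 (f 0 - (K : ℝ) * R) with hcase | hcase
      · have hlb : ENNReal.ofReal ((f 0 - (K : ℝ) * R) * (-b)) ≤ J := by
          rw [hJdef]
          calc ENNReal.ofReal ((f 0 - (K : ℝ) * R) * (-b))
              = ∫⁻ w in Set.Iio (0:ℝ),
                ENNReal.ofReal ((f 0 - (K : ℝ) * R) * (2 * (b / w))) ∂(Measure.map W μ) :=
              (lint_neg (Measure.map W μ) hc₁ hc₂ hsupp hneg hcase hb0).symm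
            _ ≤ _ := by
                apply lintegral_mono_ae
                filter_upwards [haeIio] with w hw
                obtain ⟨hρ, hcρ⟩ := hparam w hw
                rw [hsetIcc w hw, hf_density]
                calc ENNReal.ofReal ((f 0 - (K : ℝ) * R) * (2 * (b / w)))
                    ≤ (volume.withDensity fun x => ENNReal.ofReal (f x))
                      (Set.Ioo (-a - b / w) (-a + b / w)) := le_density_Ioo hK hε hρ hcρ hRε
                  _ ≤ _ := measure_mono Set.Ioo_subset_Icc_self
        exact (ENNReal.ofReal_le_iff_le_toReal hfinJ).1 hlb
      · have h0 : (0:ℝ) ≤ J.toReal := ENNReal.toReal_nonneg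
        nlinarith [mul_nonneg (by linarith : (0:ℝ) ≤ (K : ℝ) * R - f 0) (by linarith : (0:ℝ) ≤ -b)]
    rw [hJp0]
    simp only [ENNReal.toReal_zero, sub_zero]
    have habs : |J.toReal + f 0 * b| ≤ (K : ℝ) * R * (-b) := by
      rw [abs_le]
      constructor
      · nlinarith
      · nlinarith
    calc |J.toReal + f 0 * b|
        ≤ (K : ℝ) * R * (-b) := habs
      _ ≤ (K : ℝ) * (1 + c₁⁻¹ + c₂⁻¹) * (|a| + |b|) ^ 2 := by
          rw [hRdef, hbabs]
          have hb0' : (0:ℝ) ≤ -b := by linarith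
          nlinarith [K.coe_nonneg, abs_nonneg a, hb0', hc₁i.le, hc₂i.le,
            mul_nonneg K.coe_nonneg (mul_nonneg (abs_nonneg a) hb0'),
            mul_nonneg (mul_nonneg K.coe_nonneg hc₁i.le) (mul_nonneg (abs_nonneg a) hb0'),
            mul_nonneg (mul_nonneg K.coe_nonneg hc₂i.le) (mul_nonneg (abs_nonneg a) hb0'),
            mul_nonneg (mul_nonneg K.coe_nonneg hc₂i.le) (sq_nonneg b),
            mul_nonneg (mul_nonneg K.coe_nonneg hc₁i.le) (sq_nonneg (|a|)),
            mul_nonneg (mul_nonneg K.coe_nonneg hc₂i.le) (sq_nonneg (|a|)),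
            mul_nonneg K.coe_nonneg (sq_nonneg (|a|)),
            mul_nonneg K.coe_nonneg (sq_nonneg b)]
end

section
/- Fix τ ∈ (0,1), λ ≥ 0, integers p, N, T ≥ 1, responses y_{it} ∈ ℝ and covariates x_{it} ∈ ℝ^p. Suppose θ̂ = (β̂, α̂) ∈ ℝ^p × ℝ^N minimizes the objective (β, α) ↦ Σ_{i=1}^N Σ_{t=1}^T ρ_τ(y_{it} − x_{it}'β − α_i) + λ Σ_{i=1}^N |α_i|, and that the observations are in general position at θ̂, in the sense that at most p + N of the NT + N quantities consisting of the residuals y_{it} − x_{it}'β̂ − α̂_i (over all (i,t)) together with the fitted effects α̂_i (over all i) are exactly zero. Then ‖ Σ_{i=1}^N Σ_{t=1}^T x_{it} · ψ_τ(y_{it} − x_{it}'β̂ − α̂_i) ‖ ≤ (p + N)·( max_{i,t} ‖x_{it}‖ + 1 ), where ‖·‖ is the Euclidean norm. -/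
open scoped RealInnerProductSpace

/-- Subgradient-type one-step inequality for the check function. -/
lemma check_step (τ u h : ℝ) (hc : u = 0 ∨ |h| < |u|) :
    checkFn τ (u + h) ≤ checkFn τ u + scoreFn τ u * h + (if u = 0 then |h| else 0) := by
  unfold checkFn scoreFn
  rcases hc with h0 | hlt
  · subst h0
    simp only [zero_add, if_pos rfl, zero_mul, lt_irrefl]
    rcases lt_or_ge h 0 with hh | hh
    · rw [if_pos hh, abs_of_neg hh]
      norm_num
      nlinarith
    · rw [if_neg (not_lt.mpr hh), abs_of_nonneg hh]
      norm_num
      nlinarith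
  · have hu : u ≠ 0 := by
      intro e
      rw [e, abs_zero] at hlt
      exact absurd hlt (not_lt.mpr (abs_nonneg h))
    rw [if_neg hu]
    obtain ⟨hl, hr⟩ := abs_lt.mp hlt
    rcases lt_or_ge u 0 with hu0 | hu0
    · have habs : |u| = -u := abs_of_neg hu0
      have h1 : u + h < 0 := by rw [habs] at hr; linarith
      rw [if_pos hu0, if_pos h1]
      exact le_of_eq (by ring)
    · have hu0' : 0 < u := lt_of_le_of_ne hu0 (Ne.symm hu)
      have habs : |u| = u := abs_of_pos hu0'
      have h1 : ¬ (u + h < 0) := by rw [habs] at hl; push_neg; linarith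
      rw [if_neg (not_lt.mpr hu0), if_neg h1]
      exact le_of_eq (by ring)

/-- Gradient-condition bound for the penalized panel quantile regression estimator
(first assertion of Lemma S.2): if `(β̂, α̂)` minimizes the penalized objective and the
observations are in general position (at most `p + N` of the `NT + N` residuals and
fitted effects vanish), then
`‖Σᵢ Σₜ x_{it} ψ_τ(y_{it} − x_{it}'β̂ − α̂ᵢ)‖ ≤ (p + N)(max_{i,t} ‖x_{it}‖ + 1)`. -/
theorem penalized_qr_score_bound_beta
    (τ : ℝ) (hτ : τ ∈ Set.Ioo (0 : ℝ) 1) (lam : ℝ) (hlam : 0 ≤ lam)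
    (p N T : ℕ) (hp : 1 ≤ p) (hN : 1 ≤ N) (hT : 1 ≤ T)
    (y : Fin N → Fin T → ℝ) (x : Fin N → Fin T → EuclideanSpace ℝ (Fin p))
    (βhat : EuclideanSpace ℝ (Fin p)) (αhat : Fin N → ℝ)
    (hmin : ∀ (β : EuclideanSpace ℝ (Fin p)) (α : Fin N → ℝ),
      (∑ i, ∑ t, checkFn τ (y i t - ⟪x i t, βhat⟫ - αhat i)) + lam * ∑ i, |αhat i|
        ≤ (∑ i, ∑ t, checkFn τ (y i t - ⟪x i t, β⟫ - α i)) + lam * ∑ i, |α i|)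
    (hgen : Set.ncard {it : Fin N × Fin T |
          y it.1 it.2 - ⟪x it.1 it.2, βhat⟫ - αhat it.1 = 0}
        + Set.ncard {i : Fin N | αhat i = 0} ≤ p + N) :
    ‖∑ i, ∑ t, scoreFn τ (y i t - ⟪x i t, βhat⟫ - αhat i) • x i t‖
      ≤ (p + N : ℝ) *
        ((Finset.univ.sup' ⟨(⟨0, hN⟩, ⟨0, hT⟩), Finset.mem_univ _⟩
            fun it : Fin N × Fin T => ‖x it.1 it.2‖) + 1) := by
  classical
  set w : Fin N × Fin T := (⟨0, hN⟩, ⟨0, hT⟩) with hw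
  set M : ℝ := Finset.univ.sup' ⟨w, Finset.mem_univ _⟩
      (fun it : Fin N × Fin T => ‖x it.1 it.2‖) with hM
  set r : Fin N × Fin T → ℝ :=
    fun it => y it.1 it.2 - ⟪x it.1 it.2, βhat⟫ - αhat it.1 with hr
  set S : EuclideanSpace ℝ (Fin p) :=
    ∑ it : Fin N × Fin T, scoreFn τ (r it) • x it.1 it.2 with hS
  have hgoalL : (∑ i, ∑ t, scoreFn τ (y i t - ⟪x i t, βhat⟫ - αhat i) • x i t) = S := by
    rw [hS, Fintype.sum_prod_type]
  rw [hgoalL]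
  have hxM : ∀ it : Fin N × Fin T, ‖x it.1 it.2‖ ≤ M := by
    intro it
    rw [hM]
    exact Finset.le_sup' (fun it : Fin N × Fin T => ‖x it.1 it.2‖) (Finset.mem_univ it)
  have hM0 : 0 ≤ M := le_trans (norm_nonneg (x w.1 w.2)) (hxM w)
  -- zero-residual finset and its cardinality bound
  set Zf : Finset (Fin N × Fin T) := Finset.univ.filter (fun it => r it = 0) with hZf
  have hZcard : (Zf.card : ℝ) ≤ (p : ℝ) + N := by
    have h1 : {it : Fin N × Fin T | r it = 0} = ↑Zf := by
      ext it; simp [hZf]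
    have h2 : Zf.card ≤ p + N := by
      have := le_trans (Nat.le_add_right
        (Set.ncard {it : Fin N × Fin T |
          y it.1 it.2 - ⟪x it.1 it.2, βhat⟫ - αhat it.1 = 0}) _) hgen
      rwa [show {it : Fin N × Fin T |
          y it.1 it.2 - ⟪x it.1 it.2, βhat⟫ - αhat it.1 = 0}
        = {it : Fin N × Fin T | r it = 0} from rfl, h1, Set.ncard_coe_finset] at this
    calc (Zf.card : ℝ) ≤ ((p + N : ℕ) : ℝ) := by exact_mod_cast h2
      _ = (p : ℝ) + N := by push_cast; ring
  -- choose a small step size ε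
  set δ : ℝ := Finset.univ.inf' ⟨w, Finset.mem_univ _⟩
      (fun it : Fin N × Fin T => if r it = 0 then 1 else |r it|) with hδdef
  have hδ : 0 < δ := by
    rw [hδdef]; refine (Finset.lt_inf'_iff _).2 ?_
    intro it _
    by_cases h0 : r it = 0
    · simp [h0]
    · simp [h0, abs_pos.mpr h0]
  set B : ℝ := M * ‖S‖ + 1 with hB
  have hBpos : 0 < B := by positivity
  set ε : ℝ := δ / (2 * B) with hε
  have hεpos : 0 < ε := by positivity
  -- the perturbation terms
  set h : Fin N × Fin T → ℝ := fun it => -(ε * ⟪x it.1 it.2, S⟫) with hh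
  have hsmall : ∀ it : Fin N × Fin T, r it ≠ 0 → |h it| < |r it| := by
    intro it hne
    have h1 : |h it| = ε * |⟪x it.1 it.2, S⟫| := by
      rw [hh]; rw [abs_neg, abs_mul, abs_of_pos hεpos]
    have h2 : |⟪x it.1 it.2, S⟫| ≤ ‖x it.1 it.2‖ * ‖S‖ := abs_real_inner_le_norm _ _
    have h3 : ‖x it.1 it.2‖ * ‖S‖ ≤ M * ‖S‖ :=
      mul_le_mul_of_nonneg_right (hxM it) (norm_nonneg _)
    have h4 : ε * (M * ‖S‖) < ε * B := by
      apply mul_lt_mul_of_pos_left _ hεpos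
      rw [hB]; linarith
    have h5 : ε * B = δ / 2 := by
      rw [hε]; field_simp
    have h6 : δ ≤ |r it| := by
      have := Finset.inf'_le (fun it : Fin N × Fin T => if r it = 0 then 1 else |r it|)
        (Finset.mem_univ it)
      rw [if_neg hne] at this
      exact this
    calc |h it| = ε * |⟪x it.1 it.2, S⟫| := h1
      _ ≤ ε * (‖x it.1 it.2‖ * ‖S‖) := by
          exact mul_le_mul_of_nonneg_left h2 (le_of_lt hεpos)
      _ ≤ ε * (M * ‖S‖) := mul_le_mul_of_nonneg_left h3 (le_of_lt hεpos)
      _ < ε * B := h4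
      _ = δ / 2 := h5
      _ < δ := by linarith
      _ ≤ |r it| := h6
  -- use the minimality hypothesis at the perturbed point
  have hmove := hmin (βhat + ε • S) αhat
  have hres : ∀ i t, y i t - ⟪x i t, βhat + ε • S⟫ - αhat i = r (i, t) + h (i, t) := by
    intro i t
    rw [inner_add_right, real_inner_smul_right, hh, hr]
    ring_nf
  have hsum1 : (∑ it : Fin N × Fin T, checkFn τ (r it))
      ≤ ∑ it : Fin N × Fin T, checkFn τ (r it + h it) := by
    have := le_of_add_le_add_right hmove
    rw [show (∑ i, ∑ t, checkFn τ (y i t - ⟪x i t, βhat⟫ - αhat i))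
        = ∑ it : Fin N × Fin T, checkFn τ (r it) from
        (Fintype.sum_prod_type (f := fun it : Fin N × Fin T => checkFn τ (r it))).symm] at this
    calc (∑ it : Fin N × Fin T, checkFn τ (r it))
        ≤ ∑ i, ∑ t, checkFn τ (y i t - ⟪x i t, βhat + ε • S⟫ - αhat i) := this
      _ = ∑ it : Fin N × Fin T, checkFn τ (r it + h it) := by
          rw [show (∑ it : Fin N × Fin T, checkFn τ (r it + h it))
              = ∑ i, ∑ t, checkFn τ (r (i, t) + h (i, t)) from
            Fintype.sum_prod_type (f := fun it : Fin N × Fin T => checkFn τ (r it + h it))]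
          exact Finset.sum_congr rfl fun i _ =>
            Finset.sum_congr rfl fun t _ => by rw [hres i t]
  have hsum2 : (∑ it : Fin N × Fin T, checkFn τ (r it + h it))
      ≤ ∑ it : Fin N × Fin T,
          (checkFn τ (r it) + scoreFn τ (r it) * h it + (if r it = 0 then |h it| else 0)) := by
    apply Finset.sum_le_sum
    intro it _
    apply check_step
    by_cases h0 : r it = 0
    · exact Or.inl h0
    · exact Or.inr (hsmall it h0)
  have hsum3 : 0 ≤ (∑ it : Fin N × Fin T, scoreFn τ (r it) * h it)
      + ∑ it : Fin N × Fin T, (if r it = 0 then |h it| else 0) := by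
    have := le_trans hsum1 hsum2
    rw [Finset.sum_add_distrib, Finset.sum_add_distrib] at this
    linarith
  -- identify the first sum with -ε⟪S,S⟫
  have hSS : ⟪S, S⟫ = ∑ it : Fin N × Fin T, scoreFn τ (r it) * ⟪x it.1 it.2, S⟫ := by
    rw [hS, sum_inner]
    exact Finset.sum_congr rfl (fun it _ => real_inner_smul_left _ _ _)
  have hsumA : (∑ it : Fin N × Fin T, scoreFn τ (r it) * h it) = -(ε * ⟪S, S⟫) := by
    rw [hSS, Finset.mul_sum, ← Finset.sum_neg_distrib]
    exact Finset.sum_congr rfl (fun it _ => by rw [hh]; ring)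
  have hsumB : (∑ it : Fin N × Fin T, (if r it = 0 then |h it| else 0))
      = ε * ∑ it ∈ Zf, |⟪x it.1 it.2, S⟫| := by
    rw [Finset.mul_sum, ← Finset.sum_filter]
    exact Finset.sum_congr rfl (fun it hit => by
      rw [hh, abs_neg, abs_mul, abs_of_pos hεpos])
  have hkey : ⟪S, S⟫ ≤ ∑ it ∈ Zf, |⟪x it.1 it.2, S⟫| := by
    rw [hsumA, hsumB] at hsum3
    nlinarith
  have hbound : (∑ it ∈ Zf, |⟪x it.1 it.2, S⟫|) ≤ (Zf.card : ℝ) * (M * ‖S‖) := by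
    calc (∑ it ∈ Zf, |⟪x it.1 it.2, S⟫|)
        ≤ ∑ _it ∈ Zf, M * ‖S‖ := by
          apply Finset.sum_le_sum
          intro it _
          exact le_trans (abs_real_inner_le_norm _ _)
            (mul_le_mul_of_nonneg_right (hxM it) (norm_nonneg _))
      _ = (Zf.card : ℝ) * (M * ‖S‖) := by rw [Finset.sum_const, nsmul_eq_mul]
  have hfinal : ‖S‖ * ‖S‖ ≤ ((p : ℝ) + N) * (M * ‖S‖) := by
    have h1 : ⟪S, S⟫ = ‖S‖ * ‖S‖ := real_inner_self_eq_norm_mul_norm S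
    have h2 : (Zf.card : ℝ) * (M * ‖S‖) ≤ ((p : ℝ) + N) * (M * ‖S‖) := by
      apply mul_le_mul_of_nonneg_right hZcard
      positivity
    linarith [hkey, hbound]
  have hpN : (0 : ℝ) ≤ (p : ℝ) + N := by positivity
  rcases eq_or_lt_of_le (norm_nonneg S) with hS0 | hS0
  · rw [← hS0]
    have h1 : (0 : ℝ) ≤ M + 1 := by linarith
    exact mul_nonneg hpN h1
  · have hstep : ((p : ℝ) + N) * (M * ‖S‖) ≤ (((p : ℝ) + N) * (M + 1)) * ‖S‖ := by
      have : ((p : ℝ) + N) * (M * ‖S‖) = (((p : ℝ) + N) * M) * ‖S‖ := by ring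
      rw [this]
      apply mul_le_mul_of_nonneg_right _ (norm_nonneg S)
      have h1 : ((p : ℝ) + N) * M ≤ ((p : ℝ) + N) * (M + 1) :=
        mul_le_mul_of_nonneg_left (by linarith) hpN
      exact h1
    have h2 : ‖S‖ * ‖S‖ ≤ (((p : ℝ) + N) * (M + 1)) * ‖S‖ := le_trans hfinal hstep
    exact le_of_mul_le_mul_right h2 hS0
end
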